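/- arXiv:math/0608759 — 3 statements merged into one kernel-verified Lean document; each statement's English description precedes it below -/
import Mathlib

section
/- Let F : T → T be a polynomial-like branched covering of a simplicial tree with global degree D = deg(F), and let V_k(T) = {v ∈ V(T) : h(v) = −k·N(F)}. Then for every k ≥ 1: D^k ≥ |V_k(T)| ≥ 2 + D + D² + ⋯ + D^{k−1} ≥ D^k/(D − 1). -/
open SimpleGraph Function Opposite

/-- A locally finite simplicial tree together with a self-map that is a
branched covering: a simplicial map (edges map onto edges) such that the
induced map on edges adjacent to any vertex is surjective onto the edges
adjacent to the image vertex, and every vertex has finitely many preimages. -/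
structure TreeDyn (V : Type) where
  G : SimpleGraph V
  isTree : G.IsTree
  locFin : ∀ v : V, (G.neighborSet v).Finite
  F : V → V
  adjMap : ∀ ⦃v w : V⦄, G.Adj v w → G.Adj (F v) (F w)
  edgeSurj : ∀ ⦃v w' : V⦄, G.Adj (F v) w' → ∃ w : V, G.Adj v w ∧ F w = w'
  finFibers : ∀ v' : V, {v : V | F v = v'}.Finite

namespace TreeDyn

variable {V : Type}

/-- A local degree function for the branched covering `T.F`: positive on
vertices and edges (edges adjacent to `v` are recorded by their other
endpoint), symmetric on edges, satisfying the Riemann–Hurwitz style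
inequality `2 deg(v) - 2 ≥ Σ (deg e - 1)` at each vertex, and the local
equality `deg v = Σ {deg e' : e' adjacent to v, F(e') = F(e)}` for each
edge `e` adjacent to `v`. -/
def IsLocalDeg (T : TreeDyn V) (dV : V → ℕ) (dE : V → V → ℕ) : Prop :=
  (∀ v w : V, dE v w = dE w v) ∧
  (∀ v : V, 0 < dV v) ∧
  (∀ ⦃v w : V⦄, T.G.Adj v w → 0 < dE v w) ∧
  (∀ v : V, (∑ᶠ w ∈ T.G.neighborSet v, (dE v w - 1)) + 2 ≤ 2 * dV v) ∧
  (∀ ⦃v w : V⦄, T.G.Adj v w →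
    dV v = ∑ᶠ w' ∈ {w' : V | T.G.Adj v w' ∧ T.F w' = T.F w}, dE v w')

/-- `x` and `y` are in the same grand orbit if `F^[n] x = F^[m] y` for some `n, m > 0`. -/
def GrandOrbit (T : TreeDyn V) (x y : V) : Prop :=
  ∃ n m : ℕ, 0 < n ∧ 0 < m ∧ T.F^[n] x = T.F^[m] y

end TreeDyn

/-- The natural topology on the space of ends of a graph: the subspace
topology induced from the product of the (discrete) spaces of components
of complements of finite sets. -/
def endTop {V : Type} (G : SimpleGraph V) : TopologicalSpace G.end :=
  TopologicalSpace.induced Subtype.val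
    (⨅ K : (Finset V)ᵒᵖ, TopologicalSpace.induced (fun f => f K) ⊥)

/-- An end is isolated if it is an isolated point of the space of ends. -/
def IsIsolatedEnd {V : Type} (G : SimpleGraph V) (e : G.end) : Prop :=
  @IsOpen G.end (endTop G) {e}

namespace TreeDyn

variable {V : Type}

/-- `T` is polynomial-like with distinguished end `infty`:
(II) a local degree function exists, (I) `infty` is the unique isolated end,
(III) no vertex has valence one, and (IV) the grand orbit of every vertex
contains a vertex of valence at least three. -/
def IsPolyLike (T : TreeDyn V) (infty : T.G.end) : Prop :=
  (∃ dV dE, T.IsLocalDeg dV dE) ∧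
  IsIsolatedEnd T.G infty ∧
  (∀ e : T.G.end, IsIsolatedEnd T.G e → e = infty) ∧
  (∀ v : V, (T.G.neighborSet v).ncard ≠ 1) ∧
  (∀ v : V, ∃ w : V, T.GrandOrbit v w ∧ 3 ≤ (T.G.neighborSet w).ncard)

/-- The vertex `x` lies below the vertex `v` (the path from `x` to the
end `infty` passes through `v`): either `x = v`, or `x` and `infty`
determine different components of the complement of `{v}`. -/
def Below (T : TreeDyn V) (infty : T.G.end) (v x : V) : Prop :=
  x = v ∨ ∃ h : x ∉ (({v} : Finset V) : Set V),
    T.G.componentComplMk h ≠ infty.val (op ({v} : Finset V))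

/-- The end `p` lies below the vertex `v` (the path from `p` to `infty`
passes through `v`). -/
def EndBelow (T : TreeDyn V) (infty : T.G.end) (v : V) (p : T.G.end) : Prop :=
  p.val (op ({v} : Finset V)) ≠ infty.val (op ({v} : Finset V))

/-- `v₀` is the base of the tree: the vertex of valence ≥ 3 closest to
`infty`, i.e. every vertex of valence ≥ 3 lies below it. -/
def IsBase (T : TreeDyn V) (infty : T.G.end) (v₀ : V) : Prop :=
  3 ≤ (T.G.neighborSet v₀).ncard ∧
  ∀ w : V, 3 ≤ (T.G.neighborSet w).ncard → T.Below infty v₀ w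

open Classical in
/-- The combinatorial height relative to the base `v₀`: `|h v|` is the
graph distance to `v₀`, with `h v ≥ 0` exactly when `v` lies on the ray
from `v₀` to `infty` (i.e. `v₀` lies below `v`). -/
noncomputable def height (T : TreeDyn V) (infty : T.G.end) (v₀ : V) (v : V) : ℤ :=
  if T.Below infty v v₀ then (T.G.dist v₀ v : ℤ) else -(T.G.dist v₀ v : ℤ)

/-- `Dg` is the global degree of `T.F`: for every edge `{v,w}`, the sum of
the degrees of the edges mapping onto it equals `Dg`. -/
def IsGlobalDeg (T : TreeDyn V) (dE : V → V → ℕ) (Dg : ℕ) : Prop :=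
  ∀ ⦃v w : V⦄, T.G.Adj v w →
    Dg = ∑ᶠ a ∈ {a : V | T.F a = v}, ∑ᶠ b ∈ {b : V | T.G.Adj a b ∧ T.F b = w}, dE a b

/-- The critical multiplicity of a vertex. -/
noncomputable def multV (T : TreeDyn V) (dV : V → ℕ) (dE : V → V → ℕ) (v : V) : ℕ :=
  2 * dV v - 2 - ∑ᶠ w ∈ T.G.neighborSet v, (dE v w - 1)

/-- The critical multiplicity of an end `p ≠ infty`: the limiting
(= minimal) value of `dV` along the path from `infty` to `p`, minus one. -/
noncomputable def multEnd (T : TreeDyn V) (infty : T.G.end) (dV : V → ℕ) (p : T.G.end) : ℕ :=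
  sInf {d : ℕ | ∃ v : V, T.EndBelow infty v p ∧ dV v = d} - 1

/-- `μ` is the mass function: `μ v = 1` for `h(v) ≥ 0` and
`μ(F v) = (deg F / deg v) · μ v`. -/
def IsMass (T : TreeDyn V) (infty : T.G.end) (v₀ : V) (dV : V → ℕ) (Dg : ℕ)
    (μ : V → ℚ) : Prop :=
  (∀ v : V, 0 ≤ T.height infty v₀ v → μ v = 1) ∧
  (∀ v : V, μ (T.F v) = ((Dg : ℚ) / (dV v : ℚ)) * μ v)

end TreeDyn

section AuxGen
open CategoryTheory
variable {V : Type}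


/-- Along a walk avoiding `K`, the component-complement is constant. -/
lemma compMk_eq_of_walk {G : SimpleGraph V} {K : Set V} :
    ∀ {a b : V} (p : G.Walk a b) (hs : ∀ x ∈ p.support, x ∉ K),
      G.componentComplMk (hs a p.start_mem_support) = G.componentComplMk (hs b p.end_mem_support)
  | a, _, SimpleGraph.Walk.nil, _ => rfl
  | a, b, SimpleGraph.Walk.cons h q, hs => by
      have h1 : ∀ x ∈ q.support, x ∉ K := fun x hx => hs x (by simp [hx])
      exact (G.componentComplMk_eq_of_adj (hs a (SimpleGraph.Walk.start_mem_support _))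
        (h1 _ q.start_mem_support) h).trans (compMk_eq_of_walk q h1)

/-- If two vertices have equal component-complement, there's a walk avoiding `K`. -/
lemma exists_walk_of_compMk_eq {G : SimpleGraph V} {K : Set V} {a b : V}
    (ha : a ∉ K) (hb : b ∉ K)
    (h : G.componentComplMk ha = G.componentComplMk hb) :
    ∃ p : G.Walk a b, ∀ x ∈ p.support, x ∉ K := by
  have hr : (G.induce Kᶜ).Reachable ⟨a, ha⟩ ⟨b, hb⟩ := by
    rw [← SimpleGraph.ConnectedComponent.eq]; exact h
  obtain ⟨q⟩ := hr
  refine ⟨q.map (SimpleGraph.Embedding.induce (Kᶜ : Set V)).toHom, ?_⟩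
  intro x hx
  have hx : x ∈ (q.map (SimpleGraph.Embedding.induce (Kᶜ : Set V)).toHom).support := hx
  rw [SimpleGraph.Walk.support_map, List.mem_map] at hx
  obtain ⟨⟨y, hy⟩, _, rfl⟩ := hx
  exact hy


/-- In a path, a vertex in both the take- and drop-parts is the split vertex. -/
lemma mem_take_drop [DecidableEq V] {G : SimpleGraph V} {a b w y : V} {p : G.Walk a b}
    (hp : p.IsPath) (hw : w ∈ p.support)
    (h1 : y ∈ (p.takeUntil w hw).support) (h2 : y ∈ (p.dropUntil w hw).support) : y = w := by
  by_contra hne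
  have hnd := hp.support_nodup
  rw [← SimpleGraph.Walk.take_spec p hw, SimpleGraph.Walk.support_append] at hnd
  have h2'' : y ∈ w :: (p.dropUntil w hw).support.tail :=
    (SimpleGraph.Walk.support_eq_cons (p.dropUntil w hw)) ▸ h2
  rcases List.mem_cons.mp h2'' with h | h
  · exact hne h
  · exact (List.disjoint_of_nodup_append hnd) h1 h

lemma dist_le_of_mem_support [DecidableEq V] {G : SimpleGraph V} {a b y : V} {p : G.Walk a b}
    (hy : y ∈ p.support) : G.dist a y ≤ p.length :=
  le_trans (SimpleGraph.dist_le (p.takeUntil y hy)) (SimpleGraph.Walk.length_takeUntil_le p hy)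

/-- Adjacent vertices have different distances to a fixed vertex, in a tree. -/
lemma adj_dist_ne {G : SimpleGraph V} (hT : G.IsTree) (v₀ : V) {u v : V} (huv : G.Adj u v) :
    G.dist v₀ u ≠ G.dist v₀ v := by
  classical
  intro he
  obtain ⟨p, hp, hl⟩ := hT.isConnected.exists_path_of_dist v₀ u
  by_cases hmem : v ∈ p.support
  · have h1 : G.dist v₀ v ≤ (p.takeUntil v hmem).length := SimpleGraph.dist_le _
    have h2 : (p.takeUntil v hmem).length + (p.dropUntil v hmem).length = p.length := by
      rw [← SimpleGraph.Walk.length_append, SimpleGraph.Walk.take_spec]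
    have h3 : (p.dropUntil v hmem).length = 0 := by omega
    exact G.irrefl (SimpleGraph.Walk.eq_of_length_eq_zero h3 ▸ huv)
  · have hq : (p.concat huv).IsPath := by
      rw [SimpleGraph.Walk.isPath_def, SimpleGraph.Walk.support_concat]
      exact List.Nodup.append hp.support_nodup (by simp) (by simpa using fun h => hmem h)
    obtain ⟨r, hr, hrl⟩ := hT.isConnected.exists_path_of_dist v₀ v
    have huniq := (hT.existsUnique_path v₀ v).unique hq hr
    have hlen : r.length = p.length + 1 := by
      rw [← huniq, SimpleGraph.Walk.length_concat]
    omega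

lemma adj_dist_le {G : SimpleGraph V} (hc : G.Connected) (v₀ : V) {u v : V} (huv : G.Adj u v) :
    G.dist v₀ v ≤ G.dist v₀ u + 1 := by
  have := hc.dist_triangle (u := v₀) (v := u) (w := v)
  have h2 : G.dist u v = 1 := by rwa [SimpleGraph.dist_eq_one_iff_adj]
  omega

/-- Adjacent: distance to v₀ is the predecessor or successor. -/
lemma adj_dist_cases {G : SimpleGraph V} (hT : G.IsTree) (v₀ : V) {u v : V} (huv : G.Adj u v) :
    G.dist v₀ v = G.dist v₀ u + 1 ∨ G.dist v₀ v + 1 = G.dist v₀ u := by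
  have h1 := adj_dist_ne hT v₀ huv
  have h2 := adj_dist_le hT.isConnected v₀ huv
  have h3 := adj_dist_le hT.isConnected v₀ huv.symm
  omega

/-- Existence of a closer neighbour. -/
lemma exists_closer {G : SimpleGraph V} (hT : G.IsTree) (v₀ : V) {v : V} (hv : v ≠ v₀) :
    ∃ u : V, G.Adj v u ∧ G.dist v₀ u + 1 = G.dist v₀ v := by
  obtain ⟨p, hp, hl⟩ := hT.isConnected.exists_path_of_dist v₀ v
  have hd : 0 < G.dist v₀ v := hT.isConnected.pos_dist_of_ne (Ne.symm hv)
  cases p with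
  | nil => simp at hd
  | cons h q =>
    -- rebuild as concat
    obtain ⟨x, r, hadj, hconcat⟩ := SimpleGraph.Walk.exists_cons_eq_concat h q
    refine ⟨x, hadj.symm, ?_⟩
    have hlen : r.length + 1 = G.dist v₀ v := by
      rw [← hl, hconcat, SimpleGraph.Walk.length_concat]
    have hle : G.dist v₀ x ≤ r.length := SimpleGraph.dist_le r
    have hge := adj_dist_le hT.isConnected v₀ hadj
    omega

/-- Uniqueness of the closer neighbour. -/
lemma closer_unique {G : SimpleGraph V} (hT : G.IsTree) (v₀ : V) {v u₁ u₂ : V}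
    (h1 : G.Adj v u₁) (h2 : G.Adj v u₂)
    (hd1 : G.dist v₀ u₁ + 1 = G.dist v₀ v) (hd2 : G.dist v₀ u₂ + 1 = G.dist v₀ v) :
    u₁ = u₂ := by
  classical
  obtain ⟨p1, hp1, hl1⟩ := hT.isConnected.exists_path_of_dist v₀ u₁
  obtain ⟨p2, hp2, hl2⟩ := hT.isConnected.exists_path_of_dist v₀ u₂
  have hv1 : v ∉ p1.support := fun hmem => by
    have := dist_le_of_mem_support hmem; omega
  have hv2 : v ∉ p2.support := fun hmem => by
    have := dist_le_of_mem_support hmem; omega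
  have hq1 : (p1.concat h1.symm).IsPath := by
    rw [SimpleGraph.Walk.isPath_def, SimpleGraph.Walk.support_concat]
    exact List.Nodup.append hp1.support_nodup (by simp) (by simpa using fun h => hv1 h)
  have hq2 : (p2.concat h2.symm).IsPath := by
    rw [SimpleGraph.Walk.isPath_def, SimpleGraph.Walk.support_concat]
    exact List.Nodup.append hp2.support_nodup (by simp) (by simpa using fun h => hv2 h)
  have heq := (hT.existsUnique_path v₀ v).unique hq1 hq2
  -- compare last edges
  have he1 : s(u₁, v) ∈ (p1.concat h1.symm).edges := by
    rw [SimpleGraph.Walk.edges_concat]; simp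
  have he2 : s(u₁, v) ∈ (p2.concat h2.symm).edges := heq ▸ he1
  rw [SimpleGraph.Walk.edges_concat, List.concat_eq_append, List.mem_append] at he2
  rcases he2 with he2 | he2
  · exfalso
    exact hv2 (SimpleGraph.Walk.snd_mem_support_of_mem_edges p2 he2)
  · rw [List.mem_singleton] at he2
    rcases Sym2.eq_iff.mp he2 with ⟨ha, _⟩ | ⟨ha, hb⟩
    · exact ha
    · exact absurd ha.symm h1.ne

end AuxGen
section AuxEnd
open CategoryTheory
variable {V : Type}

lemma end_common {G : SimpleGraph V} (infty : G.end) (K L : Finset V) :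
    ∃ (c : V) (hK : c ∉ (K : Set V)) (hL : c ∉ (L : Set V)),
      G.componentComplMk hK = infty.val (op K) ∧ G.componentComplMk hL = infty.val (op L) := by
  classical
  obtain ⟨c, hc, heq⟩ := (infty.val (op (K ∪ L))).exists_eq_mk
  have hcK : c ∉ (K : Set V) := fun h => hc (by simp only [Finset.coe_union, Set.mem_union]; exact Or.inl h)
  have hcL : c ∉ (L : Set V) := fun h => hc (by simp only [Finset.coe_union, Set.mem_union]; exact Or.inr h)
  refine ⟨c, hcK, hcL, ?_, ?_⟩
  · have harr := infty.2 (opHomOfLE (Finset.subset_union_left : K ≤ K ∪ L) : op (K ∪ L) ⟶ op K)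
    rw [← harr, ← heq, SimpleGraph.componentComplFunctor_map]
    rfl
  · have harr := infty.2 (opHomOfLE (Finset.subset_union_right : L ≤ K ∪ L) : op (K ∪ L) ⟶ op L)
    rw [← harr, ← heq, SimpleGraph.componentComplFunctor_map]
    rfl

namespace TreeDyn

variable (T : TreeDyn V) (infty : T.G.end)

/-- `Below` is asymmetric on distinct vertices. -/
lemma below_asymm {u w : V} (hne : w ≠ u)
    (h1 : T.Below infty u w) (h2 : T.Below infty w u) : False := by
  classical
  rcases h1 with h1 | ⟨hw, hne1⟩
  · exact hne h1
  rcases h2 with h2 | ⟨hu, hne2⟩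
  · exact hne h2.symm
  obtain ⟨c, hcu, hcw, hequ, heqw⟩ := end_common infty ({u} : Finset V) ({w} : Finset V)
  obtain ⟨q0⟩ := T.isTree.isConnected u c
  set p := q0.bypass with hpdef
  have hp : p.IsPath := q0.bypass_isPath
  have hwp : w ∈ p.support := by
    by_contra hwp
    have havoid : ∀ x ∈ p.support, x ∉ ((({w} : Finset V)) : Set V) := by
      intro x hx hxw
      rw [Finset.coe_singleton, Set.mem_singleton_iff] at hxw
      exact hwp (hxw ▸ hx)
    have := compMk_eq_of_walk p havoid
    exact hne2 (this.trans heqw)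
  have hudrop : u ∉ (p.dropUntil w hwp).support := by
    intro hmem
    exact (Ne.symm hne) (mem_take_drop hp hwp (SimpleGraph.Walk.start_mem_support _) hmem)
  have havoid' : ∀ x ∈ (p.dropUntil w hwp).support, x ∉ ((({u} : Finset V)) : Set V) := by
    intro x hx hxu
    rw [Finset.coe_singleton, Set.mem_singleton_iff] at hxu
    exact hudrop (hxu ▸ hx)
  have := compMk_eq_of_walk (p.dropUntil w hwp) havoid'
  exact hne1 (this.trans hequ)

end TreeDyn
end AuxEnd
section AuxM
open CategoryTheory
variable {V : Type}

lemma avoid_singleton {G : SimpleGraph V} {a b w : V} (p : G.Walk a b) (h : w ∉ p.support) :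
    ∀ x ∈ p.support, x ∉ ((({w} : Finset V)) : Set V) := by
  intro x hx hxw
  rw [Finset.coe_singleton, Set.mem_singleton_iff] at hxw
  exact h (hxw ▸ hx)

lemma IsPath_concat {G : SimpleGraph V} {a b c : V} {p : G.Walk a b} (hp : p.IsPath)
    (h : G.Adj b c) (hc : c ∉ p.support) : (p.concat h).IsPath := by
  rw [SimpleGraph.Walk.isPath_def, SimpleGraph.Walk.support_concat]
  exact List.Nodup.append hp.support_nodup (by simp) (by simpa using fun h' => hc h')

namespace TreeDyn

variable (T : TreeDyn V) (infty : T.G.end) (v₀ : V)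

/-- M3: the closer neighbour of a separating vertex is separating (or the base). -/
lemma below_closer {w u : V} (hw0 : w ≠ v₀) (hbw : T.Below infty w v₀)
    (hadj : T.G.Adj u w) (hd : T.G.dist v₀ u + 1 = T.G.dist v₀ w) :
    u = v₀ ∨ T.Below infty u v₀ := by
  classical
  by_contra hcon
  push_neg at hcon
  obtain ⟨hu0, hnb⟩ := hcon
  rcases hbw with h | ⟨h0w, hne_w⟩
  · exact hw0 h.symm
  have h0u : v₀ ∉ ((({u} : Finset V)) : Set V) := by
    simpa using Ne.symm hu0
  have heq0 : ¬ (T.G.componentComplMk h0u ≠ infty.val (op ({u} : Finset V))) :=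
    fun hne => hnb (Or.inr ⟨h0u, hne⟩)
  rw [not_not] at heq0
  obtain ⟨c, hcu, hcw, hequ, heqw⟩ := end_common infty ({u} : Finset V) ({w} : Finset V)
  obtain ⟨q0, hq0⟩ := exists_walk_of_compMk_eq h0u hcu (heq0.trans hequ.symm)
  set p := q0.bypass with hpdef
  have hp : p.IsPath := q0.bypass_isPath
  have hpavoid : u ∉ p.support := by
    intro hmem
    have := hq0 u (q0.support_bypass_subset hmem)
    simp at this
  have hwp : w ∈ p.support := by
    by_contra hwp
    have := compMk_eq_of_walk p (avoid_singleton p hwp)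
    exact hne_w (this.trans heqw)
  have ht : (p.takeUntil w hwp).IsPath := hp.takeUntil hwp
  have htavoid : u ∉ (p.takeUntil w hwp).support :=
    fun hmem => hpavoid (SimpleGraph.Walk.support_takeUntil_subset _ _ hmem)
  obtain ⟨s, hs, hsl⟩ := T.isTree.isConnected.exists_path_of_dist v₀ u
  have hws : w ∉ s.support := by
    intro hmem
    have := dist_le_of_mem_support hmem
    omega
  have hs' : (s.concat hadj).IsPath := IsPath_concat hs hadj hws
  have huniq := (T.isTree.existsUnique_path v₀ w).unique ht hs'
  have : u ∈ (p.takeUntil w hwp).support := by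
    rw [huniq, SimpleGraph.Walk.support_concat]
    exact List.mem_append.mpr (Or.inl s.end_mem_support)
  exact htavoid this

/-- M5: a vertex cannot have two distinct farther separating neighbours. -/
lemma two_up_nbrs {x w₁ w₂ : V}
    (h1 : T.G.Adj x w₁) (h2 : T.G.Adj x w₂) (hne : w₁ ≠ w₂)
    (hd1 : T.G.dist v₀ w₁ = T.G.dist v₀ x + 1) (hd2 : T.G.dist v₀ w₂ = T.G.dist v₀ x + 1)
    (hb1 : T.Below infty w₁ v₀) (hb2 : T.Below infty w₂ v₀) : False := by
  classical
  have hw10 : w₁ ≠ v₀ := by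
    intro h; rw [h] at hd1; simp [SimpleGraph.dist_self] at hd1
  have hw20 : w₂ ≠ v₀ := by
    intro h; rw [h] at hd2; simp [SimpleGraph.dist_self] at hd2
  rcases hb1 with h | ⟨h01, hne1⟩
  · exact hw10 h.symm
  rcases hb2 with h | ⟨h02, hne2⟩
  · exact hw20 h.symm
  obtain ⟨c, hc1, hc2, heq1, heq2⟩ := end_common infty ({w₁} : Finset V) ({w₂} : Finset V)
  obtain ⟨q0⟩ := T.isTree.isConnected v₀ c
  set p := q0.bypass with hpdef
  have hp : p.IsPath := q0.bypass_isPath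
  have hw1p : w₁ ∈ p.support := by
    by_contra hwp
    exact hne1 ((compMk_eq_of_walk p (avoid_singleton p hwp)).trans heq1)
  have hw2p : w₂ ∈ p.support := by
    by_contra hwp
    exact hne2 ((compMk_eq_of_walk p (avoid_singleton p hwp)).trans heq2)
  -- the unique path v₀ → w₁ is shortest-to-x plus the edge
  obtain ⟨s, hs, hsl⟩ := T.isTree.isConnected.exists_path_of_dist v₀ x
  have hw1s : w₁ ∉ s.support := by
    intro hmem; have := dist_le_of_mem_support hmem; omega
  have hw2s : w₂ ∉ s.support := by
    intro hmem; have := dist_le_of_mem_support hmem; omega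
  have hsc : (s.concat h1).IsPath := IsPath_concat hs h1 hw1s
  have ht1 : (p.takeUntil w₁ hw1p).IsPath := hp.takeUntil hw1p
  have huniq := (T.isTree.existsUnique_path v₀ w₁).unique ht1 hsc
  have hw2t : w₂ ∉ (p.takeUntil w₁ hw1p).support := by
    rw [huniq, SimpleGraph.Walk.support_concat]
    intro hmem
    rcases List.mem_append.mp hmem with hmem | hmem
    · exact hw2s hmem
    · rw [List.mem_singleton] at hmem; exact hne hmem.symm
  have hxt : x ∈ (p.takeUntil w₁ hw1p).support := by
    rw [huniq, SimpleGraph.Walk.support_concat]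
    exact List.mem_append.mpr (Or.inl s.end_mem_support)
  have hw2d : w₂ ∈ (p.dropUntil w₁ hw1p).support := by
    have hsplit : p.support = (p.takeUntil w₁ hw1p).support ++ (p.dropUntil w₁ hw1p).support.tail := by
      rw [← SimpleGraph.Walk.support_append, SimpleGraph.Walk.take_spec]
    have : w₂ ∈ (p.dropUntil w₁ hw1p).support.tail := by
      have := hw2p
      rw [hsplit] at this
      rcases List.mem_append.mp this with hh | hh
      · exact absurd hh hw2t
      · exact hh
    rw [SimpleGraph.Walk.support_eq_cons (p.dropUntil w₁ hw1p)]
    exact List.mem_cons_of_mem _ this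
  have hq : ((p.dropUntil w₁ hw1p).takeUntil w₂ hw2d).IsPath := (hp.dropUntil hw1p).takeUntil hw2d
  -- the unique path w₁ → w₂ passes through x
  have hr : (SimpleGraph.Walk.cons h1.symm (SimpleGraph.Walk.cons h2 SimpleGraph.Walk.nil) :
      T.G.Walk w₁ w₂).IsPath := by
    rw [SimpleGraph.Walk.isPath_def]
    simp [h1.ne', hne, h2.ne]
  have huniq2 := (T.isTree.existsUnique_path w₁ w₂).unique hq hr
  have hxq : x ∈ ((p.dropUntil w₁ hw1p).takeUntil w₂ hw2d).support := by
    rw [huniq2]; simp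
  have hxd : x ∈ (p.dropUntil w₁ hw1p).support :=
    SimpleGraph.Walk.support_takeUntil_subset _ _ hxq
  exact h1.ne (mem_take_drop hp hw1p hxt hxd)

end TreeDyn
end AuxM
section AuxM4
open CategoryTheory
variable {V : Type}
namespace TreeDyn

variable (T : TreeDyn V) (infty : T.G.end) (v₀ : V)

/-- M4: no vertex hangs off a separating vertex above the base. -/
lemma no_hang (hbase : T.IsBase infty v₀) {u v : V}
    (hu0 : u ≠ v₀) (hbu : T.Below infty u v₀)
    (hadj : T.G.Adj u v) (hd : T.G.dist v₀ v = T.G.dist v₀ u + 1)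
    (hnb : ¬ T.Below infty v v₀) : False := by
  classical
  rcases hbu with h | ⟨h0u, hneu⟩
  · exact hu0 h.symm
  have hv0 : v ≠ v₀ := by
    intro h; rw [h] at hd; simp [SimpleGraph.dist_self] at hd
  have h0v : v₀ ∉ ((({v} : Finset V)) : Set V) := by simpa using Ne.symm hv0
  have heq0 : ¬ (T.G.componentComplMk h0v ≠ infty.val (op ({v} : Finset V))) :=
    fun hne => hnb (Or.inr ⟨h0v, hne⟩)
  rw [not_not] at heq0
  have hvu : v ∉ ((({u} : Finset V)) : Set V) := by simpa using hadj.ne'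
  by_cases hvC : T.G.componentComplMk hvu = infty.val (op ({u} : Finset V))
  · -- v is on the infinity side of u : then v separates, contradiction
    obtain ⟨c, hcu, hcv, hequ, heqv⟩ := end_common infty ({u} : Finset V) ({v} : Finset V)
    obtain ⟨q0, hq0⟩ := exists_walk_of_compMk_eq h0v hcv (heq0.trans heqv.symm)
    set p := q0.bypass with hpdef
    have hp : p.IsPath := q0.bypass_isPath
    have hpv : v ∉ p.support := by
      intro hmem
      have := hq0 v (q0.support_bypass_subset hmem); simp at this
    have hup : u ∈ p.support := by
      by_contra hup
      exact hneu ((compMk_eq_of_walk p (avoid_singleton p hup)).trans hequ)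
    have hq : (p.dropUntil u hup).IsPath := hp.dropUntil hup
    have hqv : v ∉ (p.dropUntil u hup).support :=
      fun hmem => hpv (SimpleGraph.Walk.support_dropUntil_subset _ _ hmem)
    have hpath1 : (SimpleGraph.Walk.cons hadj.symm (p.dropUntil u hup)).IsPath :=
      hq.cons hqv
    obtain ⟨r0, hr0⟩ := exists_walk_of_compMk_eq hvu hcu (hvC.trans hequ.symm)
    have hpath2 : r0.bypass.IsPath := r0.bypass_isPath
    have hur : u ∉ r0.bypass.support := by
      intro hmem
      have := hr0 u (r0.support_bypass_subset hmem); simp at this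
    have huniq := (T.isTree.existsUnique_path v c).unique hpath1 hpath2
    apply hur
    rw [← huniq]
    exact List.mem_cons_of_mem _ (SimpleGraph.Walk.start_mem_support _)
  · -- v is not on the infinity side : u has three neighbours, contradicting base
    obtain ⟨u', hu', hdu'⟩ := exists_closer T.isTree v₀ hu0
    obtain ⟨c, hcu, -, hequ, -⟩ := end_common infty ({u} : Finset V) ({u} : Finset V)
    have hcne : u ≠ c := by
      intro h; rw [h] at hcu; simp at hcu
    obtain ⟨q0⟩ := T.isTree.isConnected u c
    have hp : q0.bypass.IsPath := q0.bypass_isPath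
    cases hq : q0.bypass with
    | nil => exact absurd rfl hcne
    | @cons _ x _ hux q =>
      have hqpath : q.IsPath := by
        have := hp; rw [hq] at this; exact this.of_cons
      have huq : u ∉ q.support := by
        have := hp; rw [hq, SimpleGraph.Walk.isPath_def, SimpleGraph.Walk.support_cons] at this
        exact (List.nodup_cons.mp this).1
      have hxC : T.G.componentComplMk (by simpa using hux.ne' : x ∉ ((({u} : Finset V)) : Set V))
          = infty.val (op ({u} : Finset V)) := by
        have havoid : ∀ y ∈ q.support, y ∉ ((({u} : Finset V)) : Set V) :=
          avoid_singleton q huq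
        have hcq : c ∉ ((({u} : Finset V)) : Set V) := hcu
        exact (compMk_eq_of_walk q havoid).trans hequ
      -- u' is not on the infinity side of u
      obtain ⟨s, hs, hsl⟩ := T.isTree.isConnected.exists_path_of_dist v₀ u'
      have hus : u ∉ s.support := by
        intro hmem; have := dist_le_of_mem_support hmem; omega
      have hu'C : T.G.componentComplMk (by simpa using hu'.ne' : u' ∉ ((({u} : Finset V)) : Set V))
          ≠ infty.val (op ({u} : Finset V)) := by
        intro hcontr
        apply hneu
        have havoid := avoid_singleton s hus
        exact (compMk_eq_of_walk s havoid).trans hcontr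
      -- three distinct neighbours
      have hvx : v ≠ x := fun h => hvC (by subst h; exact hxC)
      have hvu' : v ≠ u' := by
        intro h; rw [h] at hd; omega
      have hu'x : u' ≠ x := fun h => hu'C (by subst h; exact hxC)
      have hsub : ({v, u', x} : Set V) ⊆ T.G.neighborSet u := by
        intro y hy
        rcases hy with h | h | h
        · rw [h]; exact hadj
        · rw [h]; exact hu'
        · rw [h]; exact hux
      have hcard : ({v, u', x} : Set V).ncard = 3 := by
        rw [Set.ncard_insert_of_notMem (by simp [hvu', hvx]) (Set.toFinite _),
          Set.ncard_insert_of_notMem (by simp [hu'x]) (Set.toFinite _), Set.ncard_singleton]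
      have h3 : 3 ≤ (T.G.neighborSet u).ncard := by
        rw [← hcard]; exact Set.ncard_le_ncard hsub (T.locFin u)
      have := hbase.2 u h3
      exact T.below_asymm infty (Ne.symm hu0) (Or.inr ⟨h0u, hneu⟩) this

end TreeDyn
end AuxM4
section AuxHeight
open CategoryTheory
variable {V : Type}
namespace TreeDyn

/-- The unique neighbour of `v` closer to `v₀` (junk value `v₀` at `v₀`). -/
noncomputable def up (T : TreeDyn V) (v₀ : V) (v : V) : V :=
  haveI := Classical.dec (v = v₀)
  if h : v = v₀ then v₀ else Classical.choose (exists_closer T.isTree v₀ h)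

variable (T : TreeDyn V) (infty : T.G.end) (v₀ : V)

lemma up_spec {v : V} (hv : v ≠ v₀) :
    T.G.Adj v (T.up v₀ v) ∧ T.G.dist v₀ (T.up v₀ v) + 1 = T.G.dist v₀ v := by
  rw [up, dif_neg hv]
  exact Classical.choose_spec (exists_closer T.isTree v₀ hv)

lemma up_eq {v u : V} (hv : v ≠ v₀) (hadj : T.G.Adj v u)
    (hd : T.G.dist v₀ u + 1 = T.G.dist v₀ v) : u = T.up v₀ v :=
  closer_unique T.isTree v₀ hadj (T.up_spec v₀ hv).1 hd (T.up_spec v₀ hv).2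

lemma height_v0 : T.height infty v₀ v₀ = 0 := by
  rw [height, if_pos (show T.Below infty v₀ v₀ from Or.inl rfl)]
  simp

lemma height_cases {v : V} :
    T.height infty v₀ v = (T.G.dist v₀ v : ℤ) ∨
      (T.height infty v₀ v = -(T.G.dist v₀ v : ℤ) ∧ ¬ T.Below infty v v₀) := by
  rw [height]
  by_cases hb : T.Below infty v v₀
  · exact Or.inl (if_pos hb)
  · exact Or.inr ⟨if_neg hb, hb⟩

lemma height_eq_zero_iff {v : V} : T.height infty v₀ v = 0 ↔ v = v₀ := by
  constructor
  · intro h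
    have hd : T.G.dist v₀ v = 0 := by
      rcases T.height_cases infty v₀ (v := v) with h2 | ⟨h2, -⟩ <;> rw [h2] at h <;> omega
    exact ((T.isTree.isConnected.dist_eq_zero_iff).mp hd).symm
  · intro h; rw [h]; exact T.height_v0 infty v₀

lemma height_neg {v : V} (hv : T.height infty v₀ v < 0) :
    ¬ T.Below infty v v₀ ∧ v ≠ v₀ ∧
      T.height infty v₀ v = -(T.G.dist v₀ v : ℤ) ∧ 1 ≤ T.G.dist v₀ v := by
  have hv0 : v ≠ v₀ := by
    intro h; rw [h, T.height_v0 infty v₀] at hv; omega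
  rcases T.height_cases infty v₀ (v := v) with h | ⟨h, hb⟩
  · omega
  · refine ⟨hb, hv0, h, ?_⟩
    have : T.G.dist v₀ v ≠ 0 := fun h0 => hv0 ((T.isTree.isConnected.dist_eq_zero_iff).mp h0).symm
    omega

lemma height_nonneg_of_below {v : V} (hb : T.Below infty v v₀) :
    T.height infty v₀ v = (T.G.dist v₀ v : ℤ) := by
  rw [height, if_pos hb]

lemma height_of_not_below {v : V} (hb : ¬ T.Below infty v v₀) :
    T.height infty v₀ v = -(T.G.dist v₀ v : ℤ) := by
  rw [height, if_neg hb]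

/-- Heights of the neighbours of a vertex of negative height. -/
lemma nbr_heights (hbase : T.IsBase infty v₀) {v : V} (hv : T.height infty v₀ v < 0) :
    T.height infty v₀ (T.up v₀ v) = T.height infty v₀ v + 1 ∧
      ∀ w : V, T.G.Adj v w → w ≠ T.up v₀ v →
        T.height infty v₀ w = T.height infty v₀ v - 1 := by
  obtain ⟨hnb, hv0, hh, hd1⟩ := T.height_neg infty v₀ hv
  obtain ⟨hadj, hdu⟩ := T.up_spec v₀ hv0
  constructor
  · by_cases hu0 : T.up v₀ v = v₀
    · rw [hu0] at hdu
      rw [hu0, T.height_v0 infty v₀, hh]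
      simp [SimpleGraph.dist_self] at hdu
      omega
    · have hnbu : ¬ T.Below infty (T.up v₀ v) v₀ := by
        intro hbu
        exact T.no_hang infty v₀ hbase hu0 hbu hadj.symm (by omega) hnb
      rw [T.height_of_not_below infty v₀ hnbu, hh]
      omega
  · intro w hw hwu
    have hcases := adj_dist_cases T.isTree v₀ hw
    have hdw : T.G.dist v₀ w = T.G.dist v₀ v + 1 := by
      rcases hcases with h | h
      · exact h
      · exact absurd (T.up_eq v₀ hv0 hw h) hwu
    have hw0 : w ≠ v₀ := by
      intro h; rw [h] at hdw; simp [SimpleGraph.dist_self] at hdw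
    have hnbw : ¬ T.Below infty w v₀ := by
      intro hbw
      rcases T.below_closer infty v₀ hw0 hbw hw (by omega) with h | h
      · exact hv0 h
      · exact hnb h
    rw [T.height_of_not_below infty v₀ hnbw, hh, hdw]
    push_cast; omega

end TreeDyn
end AuxHeight
section AuxDeg
open CategoryTheory
variable {V : Type}
namespace TreeDyn

variable (T : TreeDyn V) (infty : T.G.end) (v₀ : V)

/-- Every neighbour of `v₀` has height `1` (and is then `Below`) or `-1`. -/
lemma v0_nbr_heights {w : V} (hadj : T.G.Adj v₀ w) :
    T.height infty v₀ w = -1 ∨ (T.Below infty w v₀ ∧ T.height infty v₀ w = 1) := by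
  have hd : T.G.dist v₀ w = 1 := SimpleGraph.dist_eq_one_iff_adj.mpr hadj
  by_cases hb : T.Below infty w v₀
  · right
    exact ⟨hb, by rw [T.height_nonneg_of_below infty v₀ hb, hd]; rfl⟩
  · left
    rw [T.height_of_not_below infty v₀ hb, hd]; rfl

/-- The finset of down-neighbours of `v₀`. -/
noncomputable def D0 (T : TreeDyn V) (infty : T.G.end) (v₀ : V) : Finset V := by
  classical
  exact (T.locFin v₀).toFinset.filter (fun w => T.height infty v₀ w = -1)

lemma mem_D0 {w : V} : w ∈ T.D0 infty v₀ ↔ T.G.Adj v₀ w ∧ T.height infty v₀ w = -1 := by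
  classical
  rw [D0]
  simp only [Finset.mem_filter, Set.Finite.mem_toFinset, SimpleGraph.mem_neighborSet]

lemma D0_card (hbase : T.IsBase infty v₀) : 2 ≤ (T.D0 infty v₀).card := by
  classical
  have h3 : 3 ≤ (T.locFin v₀).toFinset.card := by
    have := hbase.1
    rwa [Set.ncard_eq_toFinset_card _ (T.locFin v₀)] at this
  have hsplit := Finset.card_filter_add_card_filter_not
    (s := (T.locFin v₀).toFinset) (p := fun w => T.height infty v₀ w = -1)
  have hP1 : ((T.locFin v₀).toFinset.filter
      (fun w => ¬ T.height infty v₀ w = -1)).card ≤ 1 := by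
    rw [Finset.card_le_one]
    intro w1 hw1 w2 hw2
    rw [Finset.mem_filter, Set.Finite.mem_toFinset, SimpleGraph.mem_neighborSet] at hw1 hw2
    obtain ⟨ha1, hh1⟩ := hw1
    obtain ⟨ha2, hh2⟩ := hw2
    have hb1 := (T.v0_nbr_heights infty v₀ ha1).resolve_left hh1
    have hb2 := (T.v0_nbr_heights infty v₀ ha2).resolve_left hh2
    by_contra hne
    exact T.two_up_nbrs infty v₀ ha1 ha2 hne
      (by rw [SimpleGraph.dist_eq_one_iff_adj.mpr ha1, SimpleGraph.dist_self])
      (by rw [SimpleGraph.dist_eq_one_iff_adj.mpr ha2, SimpleGraph.dist_self])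
      hb1.1 hb2.1
  have hD0 : (T.D0 infty v₀).card
      = ((T.locFin v₀).toFinset.filter (fun w => T.height infty v₀ w = -1)).card := by
    rw [D0]
  omega

/-- A vertex of a graph with a base always has a neighbour. -/
lemma exists_nbr (hbase : T.IsBase infty v₀) (v : V) : ∃ w : V, T.G.Adj v w := by
  by_cases hv : v = v₀
  · have h2 := T.D0_card infty v₀ hbase
    have hne : (T.D0 infty v₀).Nonempty := Finset.card_pos.mp (by omega)
    obtain ⟨w, hw⟩ := hne
    exact ⟨w, by rw [hv]; exact ((T.mem_D0 infty v₀).mp hw).1⟩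
  · exact ⟨T.up v₀ v, (T.up_spec v₀ hv).1⟩

end TreeDyn
end AuxDeg
section AuxDeg2
open CategoryTheory
variable {V : Type}
namespace TreeDyn

variable (T : TreeDyn V) (infty : T.G.end) (v₀ : V)
variable {dV : V → ℕ} {dE : V → V → ℕ} {Dg N : ℕ}

/-- I1: at a vertex of negative height the vertex degree is the degree of the up-edge. -/
lemma dV_eq_up (hdeg : T.IsLocalDeg dV dE) (hbase : T.IsBase infty v₀)
    (hN : ∀ v : V, T.height infty v₀ (T.F v) = T.height infty v₀ v + (N : ℤ))
    {v : V} (hv : T.height infty v₀ v < 0) : dV v = dE v (T.up v₀ v) := by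
  have hv0 : v ≠ v₀ := (T.height_neg infty v₀ hv).2.1
  obtain ⟨hadj, -⟩ := T.up_spec v₀ hv0
  have hcl := hdeg.2.2.2.2 hadj
  have hset : {w' : V | T.G.Adj v w' ∧ T.F w' = T.F (T.up v₀ v)} = {T.up v₀ v} := by
    ext w'
    simp only [Set.mem_setOf_eq, Set.mem_singleton_iff]
    constructor
    · rintro ⟨hw'adj, hw'F⟩
      by_contra hne
      have h1 := (T.nbr_heights infty v₀ hbase hv).2 w' hw'adj hne
      have h2 := (T.nbr_heights infty v₀ hbase hv).1
      have e1 := hN w'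
      have e2 := hN (T.up v₀ v)
      rw [hw'F] at e1
      omega
    · rintro rfl
      exact ⟨hadj, rfl⟩
  rw [hset, finsum_mem_singleton] at hcl
  exact hcl

/-- I2: Riemann-Hurwitz consequence at a vertex of negative height. -/
lemma down_sum_le [DecidableEq V] (hdeg : T.IsLocalDeg dV dE) (hbase : T.IsBase infty v₀)
    (hN : ∀ v : V, T.height infty v₀ (T.F v) = T.height infty v₀ v + (N : ℤ))
    {v : V} (hv : T.height infty v₀ v < 0) :
    (∑ w ∈ ((T.locFin v).toFinset.erase (T.up v₀ v)), (dE v w - 1)) + 1 ≤ dV v := by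
  classical
  have hRH := hdeg.2.2.2.1 v
  rw [finsum_mem_eq_finite_toFinset_sum _ (T.locFin v)] at hRH
  have hv0 : v ≠ v₀ := (T.height_neg infty v₀ hv).2.1
  have hup_mem : T.up v₀ v ∈ (T.locFin v).toFinset := by
    rw [Set.Finite.mem_toFinset]; exact (T.up_spec v₀ hv0).1
  rw [← Finset.add_sum_erase _ _ hup_mem] at hRH
  have hdVup : dV v = dE v (T.up v₀ v) :=
    T.dV_eq_up infty v₀ hdeg hbase hN hv
  have hpos : 0 < dE v (T.up v₀ v) := hdeg.2.2.1 (T.up_spec v₀ hv0).1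
  omega

/-- I3: the vertex degrees in a fiber sum to the global degree. -/
lemma fiber_sum (hdeg : T.IsLocalDeg dV dE) (hDg : T.IsGlobalDeg dE Dg)
    {w w' : V} (hadj : T.G.Adj w w') :
    ∑ a ∈ (T.finFibers w).toFinset, dV a = Dg := by
  have h := hDg hadj
  rw [finsum_mem_eq_finite_toFinset_sum _ (T.finFibers w)] at h
  rw [h]
  apply Finset.sum_congr rfl
  intro a ha
  rw [Set.Finite.mem_toFinset, Set.mem_setOf_eq] at ha
  have hFa : T.G.Adj (T.F a) w' := by rw [ha]; exact hadj
  obtain ⟨b, hb, hFb⟩ := T.edgeSurj hFa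
  have hcl := hdeg.2.2.2.2 hb
  rw [hFb] at hcl
  exact hcl

/-- I4: fiber cardinality identity. -/
lemma fiber_card (hdeg : T.IsLocalDeg dV dE) (hDg : T.IsGlobalDeg dE Dg)
    {w w' : V} (hadj : T.G.Adj w w') :
    (T.finFibers w).toFinset.card + (∑ a ∈ (T.finFibers w).toFinset, (dV a - 1)) = Dg := by
  have h3 := T.fiber_sum hdeg hDg hadj
  have : ∑ a ∈ (T.finFibers w).toFinset, ((dV a - 1) + 1) = ∑ a ∈ (T.finFibers w).toFinset, dV a := by
    apply Finset.sum_congr rfl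
    intro a _
    have := hdeg.2.1 a
    omega
  rw [Finset.sum_add_distrib] at this
  simp only [Finset.sum_const, smul_eq_mul, mul_one] at this
  omega

/-- I5: `dV v₀ ≤ Dg`. -/
lemma dV_v0_le (hdeg : T.IsLocalDeg dV dE) (hDg : T.IsGlobalDeg dE Dg)
    (hbase : T.IsBase infty v₀) : dV v₀ ≤ Dg := by
  obtain ⟨y, hy⟩ := T.exists_nbr infty v₀ hbase v₀
  have hadj := T.adjMap hy
  have hsum := T.fiber_sum hdeg hDg hadj
  have hmem : v₀ ∈ (T.finFibers (T.F v₀)).toFinset := by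
    rw [Set.Finite.mem_toFinset, Set.mem_setOf_eq]
  calc dV v₀ ≤ ∑ a ∈ (T.finFibers (T.F v₀)).toFinset, dV a :=
        Finset.single_le_sum (fun i _ => Nat.zero_le _) hmem
    _ = Dg := hsum

/-- I6: the degree of `v₀` is the sum of the degrees of its down-edges. -/
lemma dV_v0_down (hdeg : T.IsLocalDeg dV dE) (hbase : T.IsBase infty v₀)
    (hN0 : 0 < N)
    (hN : ∀ v : V, T.height infty v₀ (T.F v) = T.height infty v₀ v + (N : ℤ)) :
    dV v₀ = ∑ w ∈ T.D0 infty v₀, dE v₀ w := by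
  classical
  have h2 := T.D0_card infty v₀ hbase
  obtain ⟨w₀, hw₀⟩ := Finset.card_pos.mp (by omega : 0 < (T.D0 infty v₀).card)
  obtain ⟨hadj₀, hh₀⟩ := (T.mem_D0 infty v₀).mp hw₀
  have hcl := hdeg.2.2.2.2 hadj₀
  have hFv0 : T.height infty v₀ (T.F v₀) = (N : ℤ) := by
    have := hN v₀; rw [T.height_v0 infty v₀] at this; omega
  have hdF : T.G.dist v₀ (T.F v₀) = N := by
    rcases T.height_cases infty v₀ (v := T.F v₀) with h | ⟨h, -⟩ <;> omega
  have key : ∀ y : V, T.height infty v₀ y = (N : ℤ) - 1 →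
      T.G.dist v₀ y + 1 = T.G.dist v₀ (T.F v₀) := by
    intro y hhy
    rcases T.height_cases infty v₀ (v := y) with h | ⟨h, -⟩ <;> omega
  have huniq : ∀ y₁ y₂ : V, T.G.Adj (T.F v₀) y₁ → T.height infty v₀ y₁ = (N : ℤ) - 1 →
      T.G.Adj (T.F v₀) y₂ → T.height infty v₀ y₂ = (N : ℤ) - 1 → y₁ = y₂ := by
    intro y₁ y₂ ha1 hh1 ha2 hh2
    exact closer_unique T.isTree v₀ ha1 ha2 (key y₁ hh1) (key y₂ hh2)
  have hset : {w' : V | T.G.Adj v₀ w' ∧ T.F w' = T.F w₀} = ↑(T.D0 infty v₀) := by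
    ext w
    simp only [Set.mem_setOf_eq, Finset.coe_filter, Finset.mem_coe]
    rw [T.mem_D0 infty v₀]
    constructor
    · rintro ⟨ha, hf⟩
      refine ⟨ha, ?_⟩
      have e1 := hN w
      have e2 := hN w₀
      rw [hf] at e1
      omega
    · rintro ⟨ha, hh⟩
      refine ⟨ha, ?_⟩
      apply huniq
      · exact T.adjMap ha
      · have := hN w; omega
      · exact T.adjMap hadj₀
      · have := hN w₀; omega
  rw [hset, finsum_mem_coe_finset] at hcl
  exact hcl

/-- I7: bound on the total down-edge excess at `v₀`. -/
lemma S1_bound (hdeg : T.IsLocalDeg dV dE) (hDg : T.IsGlobalDeg dE Dg)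
    (hbase : T.IsBase infty v₀) (hN0 : 0 < N)
    (hN : ∀ v : V, T.height infty v₀ (T.F v) = T.height infty v₀ v + (N : ℤ)) :
    (∑ w ∈ T.D0 infty v₀, (dE v₀ w - 1)) + 2 ≤ Dg := by
  have h6 := T.dV_v0_down infty v₀ hdeg hbase hN0 hN
  have h5 := T.dV_v0_le infty v₀ hdeg hDg hbase
  have hcard := T.D0_card infty v₀ hbase
  have hsum : (∑ w ∈ T.D0 infty v₀, ((dE v₀ w - 1) + 1)) = ∑ w ∈ T.D0 infty v₀, dE v₀ w := by
    apply Finset.sum_congr rfl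
    intro w hw
    have := hdeg.2.2.1 ((T.mem_D0 infty v₀).mp hw).1
    omega
  rw [Finset.sum_add_distrib] at hsum
  simp only [Finset.sum_const, smul_eq_mul, mul_one] at hsum
  omega

/-- `Dg ≥ 2`. -/
lemma two_le_Dg (hdeg : T.IsLocalDeg dV dE) (hDg : T.IsGlobalDeg dE Dg)
    (hbase : T.IsBase infty v₀) (hN0 : 0 < N)
    (hN : ∀ v : V, T.height infty v₀ (T.F v) = T.height infty v₀ v + (N : ℤ)) :
    2 ≤ Dg := by
  have := T.S1_bound infty v₀ hdeg hDg hbase hN0 hN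
  omega

end TreeDyn
end AuxDeg2
section AuxLevel
open CategoryTheory
variable {V : Type}
namespace TreeDyn

variable (T : TreeDyn V) (infty : T.G.end) (v₀ : V)

/-- Level set at depth `j` below the base. -/
def Lset (T : TreeDyn V) (infty : T.G.end) (v₀ : V) (j : ℕ) : Set V :=
  {v : V | T.height infty v₀ v = -(j : ℤ)}

lemma Lset_zero : T.Lset infty v₀ 0 = {v₀} := by
  ext v
  simp only [Lset, Set.mem_setOf_eq, Set.mem_singleton_iff, Nat.cast_zero, neg_zero]
  exact T.height_eq_zero_iff infty v₀

lemma mem_Lset_neg {j : ℕ} (hj : 1 ≤ j) {x : V} (hx : x ∈ T.Lset infty v₀ j) :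
    T.height infty v₀ x < 0 := by
  rw [Lset, Set.mem_setOf_eq] at hx
  omega

lemma up_mem_Lset (hbase : T.IsBase infty v₀) {j : ℕ} {x : V}
    (hx : x ∈ T.Lset infty v₀ (j+1)) :
    T.up v₀ x ∈ T.Lset infty v₀ j ∧ T.G.Adj x (T.up v₀ x) ∧ x ≠ v₀ := by
  have hneg : T.height infty v₀ x < 0 := T.mem_Lset_neg infty v₀ (by omega) hx
  have hx0 : x ≠ v₀ := (T.height_neg infty v₀ hneg).2.1
  have h1 := (T.nbr_heights infty v₀ hbase hneg).1
  rw [Lset, Set.mem_setOf_eq] at hx ⊢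
  refine ⟨by rw [h1, hx]; push_cast; ring, (T.up_spec v₀ hx0).1, hx0⟩

lemma Lset_finite (hbase : T.IsBase infty v₀) (j : ℕ) : (T.Lset infty v₀ j).Finite := by
  induction j with
  | zero => rw [T.Lset_zero infty v₀]; exact Set.finite_singleton _
  | succ j ih =>
    have hsub : T.Lset infty v₀ (j+1) ⊆ ⋃ v ∈ T.Lset infty v₀ j, T.G.neighborSet v := by
      intro x hx
      obtain ⟨hup, hadj, -⟩ := T.up_mem_Lset infty v₀ hbase hx
      exact Set.mem_biUnion hup hadj.symm
    exact Set.Finite.subset (Set.Finite.biUnion ih (fun v _ => T.locFin v)) hsub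

/-- Level finsets. -/
noncomputable def LFin (hbase : T.IsBase infty v₀) (j : ℕ) : Finset V :=
  (T.Lset_finite infty v₀ hbase j).toFinset

lemma mem_LFin (hbase : T.IsBase infty v₀) {j : ℕ} {x : V} :
    x ∈ T.LFin infty v₀ hbase j ↔ T.height infty v₀ x = -(j : ℤ) := by
  rw [LFin, Set.Finite.mem_toFinset]
  rfl

lemma LFin_zero (hbase : T.IsBase infty v₀) : T.LFin infty v₀ hbase 0 = {v₀} := by
  ext x
  rw [T.mem_LFin infty v₀ hbase, Finset.mem_singleton]
  simpa using T.height_eq_zero_iff infty v₀ (v := x)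

/-- Membership in the down-children finset of `v` determines the parent. -/
lemma downs_spec [DecidableEq V] (hbase : T.IsBase infty v₀) {j : ℕ} (hj : 1 ≤ j) {v : V}
    (hv : v ∈ T.LFin infty v₀ hbase j) {x : V}
    (hx : x ∈ ((T.locFin v).toFinset.erase (T.up v₀ v))) :
    T.up v₀ x = v ∧ x ∈ T.LFin infty v₀ hbase (j+1) := by
  rw [Finset.mem_erase, Set.Finite.mem_toFinset, SimpleGraph.mem_neighborSet] at hx
  obtain ⟨hxne, hadj⟩ := hx
  rw [T.mem_LFin infty v₀ hbase] at hv
  have hvneg : T.height infty v₀ v < 0 := by omega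
  have hxh := (T.nbr_heights infty v₀ hbase hvneg).2 x hadj hxne
  have hxmem : x ∈ T.LFin infty v₀ hbase (j+1) := by
    rw [T.mem_LFin infty v₀ hbase, hxh, hv]; push_cast; ring
  refine ⟨?_, hxmem⟩
  have hx0 : x ≠ v₀ := by
    intro h
    rw [h, T.height_v0 infty v₀] at hxh
    omega
  have hdv : T.G.dist v₀ v = j := by
    have := (T.height_neg infty v₀ hvneg).2.2.1
    omega
  have hdx : T.G.dist v₀ x = j + 1 := by
    have hxneg : T.height infty v₀ x < 0 := by omega
    have := (T.height_neg infty v₀ hxneg).2.2.1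
    omega
  exact (T.up_eq v₀ hx0 hadj.symm (by omega)).symm

lemma LFin_succ [DecidableEq V] (hbase : T.IsBase infty v₀) {j : ℕ} (hj : 1 ≤ j) :
    T.LFin infty v₀ hbase (j+1) =
      (T.LFin infty v₀ hbase j).biUnion
        (fun v => (T.locFin v).toFinset.erase (T.up v₀ v)) := by
  ext x
  rw [Finset.mem_biUnion]
  constructor
  · intro hx
    have hx' : x ∈ T.Lset infty v₀ (j+1) := by
      rwa [LFin, Set.Finite.mem_toFinset] at hx
    obtain ⟨hup, hadj, hx0⟩ := T.up_mem_Lset infty v₀ hbase hx'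
    refine ⟨T.up v₀ x, by rwa [LFin, Set.Finite.mem_toFinset], ?_⟩
    rw [Finset.mem_erase, Set.Finite.mem_toFinset, SimpleGraph.mem_neighborSet]
    constructor
    · -- x ≠ up (up x) by heights
      intro h
      have hupneg : T.height infty v₀ (T.up v₀ x) < 0 :=
        T.mem_Lset_neg infty v₀ hj hup
      have h2 := (T.nbr_heights infty v₀ hbase hupneg).1
      rw [Lset, Set.mem_setOf_eq] at hup
      rw [T.mem_LFin infty v₀ hbase] at hx
      rw [← h] at h2
      omega
    · exact hadj.symm
  · rintro ⟨v, hv, hx⟩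
    exact (T.downs_spec infty v₀ hbase hj hv hx).2

lemma downs_disjoint [DecidableEq V] (hbase : T.IsBase infty v₀) {j : ℕ} (hj : 1 ≤ j) :
    ∀ v₁ ∈ T.LFin infty v₀ hbase j, ∀ v₂ ∈ T.LFin infty v₀ hbase j, v₁ ≠ v₂ →
      Disjoint ((T.locFin v₁).toFinset.erase (T.up v₀ v₁))
        ((T.locFin v₂).toFinset.erase (T.up v₀ v₂)) := by
  intro v₁ h1 v₂ h2 hne
  rw [Finset.disjoint_left]
  intro x hx1 hx2
  have e1 := (T.downs_spec infty v₀ hbase hj h1 hx1).1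
  have e2 := (T.downs_spec infty v₀ hbase hj h2 hx2).1
  exact hne (e1 ▸ e2 ▸ rfl)

/-- The running sum of up-edge excesses at level `m`. -/
noncomputable def Ssum (hbase : T.IsBase infty v₀) (dE : V → V → ℕ) (m : ℕ) : ℕ :=
  ∑ x ∈ T.LFin infty v₀ hbase m, (dE x (T.up v₀ x) - 1)

variable {dV : V → ℕ} {dE : V → V → ℕ} {Dg N : ℕ}

lemma Ssum_mono (hdeg : T.IsLocalDeg dV dE) (hbase : T.IsBase infty v₀)
    (hN : ∀ v : V, T.height infty v₀ (T.F v) = T.height infty v₀ v + (N : ℤ))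
    {j : ℕ} (hj : 1 ≤ j) :
    T.Ssum infty v₀ hbase dE (j+1) ≤ T.Ssum infty v₀ hbase dE j := by
  classical
  rw [Ssum, Ssum, T.LFin_succ infty v₀ hbase hj,
    Finset.sum_biUnion]
  swap
  · exact fun v₁ h1 v₂ h2 hne => T.downs_disjoint infty v₀ hbase hj v₁ h1 v₂ h2 hne
  apply Finset.sum_le_sum
  intro v hv
  have hvneg : T.height infty v₀ v < 0 := by
    rw [T.mem_LFin infty v₀ hbase] at hv; omega
  have hsum : (∑ x ∈ ((T.locFin v).toFinset.erase (T.up v₀ v)), (dE x (T.up v₀ x) - 1)) =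
      ∑ x ∈ ((T.locFin v).toFinset.erase (T.up v₀ v)), (dE v x - 1) := by
    apply Finset.sum_congr rfl
    intro x hx
    rw [(T.downs_spec infty v₀ hbase hj hv hx).1, hdeg.1]
  rw [hsum]
  have hle := T.down_sum_le infty v₀ hdeg hbase hN hvneg
  have hdVup := T.dV_eq_up infty v₀ hdeg hbase hN hvneg
  omega

lemma LFin_one (hbase : T.IsBase infty v₀) :
    T.LFin infty v₀ hbase 1 = T.D0 infty v₀ := by
  ext x
  rw [T.mem_LFin infty v₀ hbase, T.mem_D0 infty v₀]
  constructor
  · intro hx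
    have hxneg : T.height infty v₀ x < 0 := by omega
    have hd := (T.height_neg infty v₀ hxneg).2.2.1
    have hd1 : T.G.dist v₀ x = 1 := by omega
    exact ⟨SimpleGraph.dist_eq_one_iff_adj.mp hd1, by omega⟩
  · rintro ⟨-, hh⟩
    omega

lemma Ssum_one (hdeg : T.IsLocalDeg dV dE) (hDg : T.IsGlobalDeg dE Dg)
    (hbase : T.IsBase infty v₀) (hN0 : 0 < N)
    (hN : ∀ v : V, T.height infty v₀ (T.F v) = T.height infty v₀ v + (N : ℤ)) :
    T.Ssum infty v₀ hbase dE 1 + 2 ≤ Dg := by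
  have hb := T.S1_bound infty v₀ hdeg hDg hbase hN0 hN
  rw [Ssum, T.LFin_one infty v₀ hbase]
  have : (∑ x ∈ T.D0 infty v₀, (dE x (T.up v₀ x) - 1)) =
      ∑ x ∈ T.D0 infty v₀, (dE v₀ x - 1) := by
    apply Finset.sum_congr rfl
    intro x hx
    obtain ⟨hadj, hh⟩ := (T.mem_D0 infty v₀).mp hx
    have hx0 : x ≠ v₀ := by
      intro h; rw [h, T.height_v0 infty v₀] at hh; omega
    have hup : v₀ = T.up v₀ x := by
      apply T.up_eq v₀ hx0 hadj.symm
      rw [SimpleGraph.dist_self, SimpleGraph.dist_eq_one_iff_adj.mpr hadj]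
    rw [← hup, hdeg.1]
  omega

lemma Ssum_le (hdeg : T.IsLocalDeg dV dE) (hDg : T.IsGlobalDeg dE Dg)
    (hbase : T.IsBase infty v₀) (hN0 : 0 < N)
    (hN : ∀ v : V, T.height infty v₀ (T.F v) = T.height infty v₀ v + (N : ℤ)) :
    ∀ m : ℕ, 1 ≤ m → T.Ssum infty v₀ hbase dE m + 2 ≤ Dg := by
  intro m
  induction m with
  | zero => omega
  | succ n ih =>
    intro _
    by_cases hn : 1 ≤ n
    · have := T.Ssum_mono infty v₀ hdeg hbase hN hn
      have := ih hn
      omega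
    · have hn0 : n = 0 := by omega
      subst hn0
      exact T.Ssum_one infty v₀ hdeg hDg hbase hN0 hN

end TreeDyn
end AuxLevel
section AuxCount
open CategoryTheory
variable {V : Type}
namespace TreeDyn

variable (T : TreeDyn V) (infty : T.G.end) (v₀ : V)
variable {dV : V → ℕ} {dE : V → V → ℕ} {Dg N : ℕ}

lemma LFin_fiber [DecidableEq V] (hbase : T.IsBase infty v₀) (hN0 : 0 < N)
    (hN : ∀ v : V, T.height infty v₀ (T.F v) = T.height infty v₀ v + (N : ℤ)) (k : ℕ) :
    T.LFin infty v₀ hbase ((k+1)*N) =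
      (T.LFin infty v₀ hbase (k*N)).biUnion (fun w => (T.finFibers w).toFinset) := by
  have hm : (k+1)*N = k*N + N := by ring
  ext x
  rw [Finset.mem_biUnion, T.mem_LFin infty v₀ hbase]
  constructor
  · intro hx
    refine ⟨T.F x, ?_, by rw [Set.Finite.mem_toFinset, Set.mem_setOf_eq]⟩
    rw [T.mem_LFin infty v₀ hbase]
    have h1 := hN x
    rw [hm, Nat.cast_add] at hx
    omega
  · rintro ⟨w, hw, hx⟩
    rw [Set.Finite.mem_toFinset, Set.mem_setOf_eq] at hx
    rw [T.mem_LFin infty v₀ hbase] at hw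
    have h1 := hN x
    rw [hx] at h1
    rw [hm, Nat.cast_add]
    omega

lemma fibers_disjoint (w₁ w₂ : V) (hne : w₁ ≠ w₂) :
    Disjoint (T.finFibers w₁).toFinset (T.finFibers w₂).toFinset := by
  rw [Finset.disjoint_left]
  intro x h1 h2
  rw [Set.Finite.mem_toFinset, Set.mem_setOf_eq] at h1 h2
  exact hne (h1 ▸ h2 ▸ rfl)

/-- The master step equation. -/
lemma step_eq [DecidableEq V] (hdeg : T.IsLocalDeg dV dE) (hDg : T.IsGlobalDeg dE Dg)
    (hbase : T.IsBase infty v₀) (hN0 : 0 < N)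
    (hN : ∀ v : V, T.height infty v₀ (T.F v) = T.height infty v₀ v + (N : ℤ)) (k : ℕ) :
    Dg * (T.LFin infty v₀ hbase (k*N)).card =
      (T.LFin infty v₀ hbase ((k+1)*N)).card + T.Ssum infty v₀ hbase dE ((k+1)*N) := by
  have hfib := T.LFin_fiber infty v₀ hbase hN0 hN k
  have hdisj : ∀ w₁ ∈ T.LFin infty v₀ hbase (k*N), ∀ w₂ ∈ T.LFin infty v₀ hbase (k*N),
      w₁ ≠ w₂ → Disjoint (T.finFibers w₁).toFinset (T.finFibers w₂).toFinset :=
    fun w₁ _ w₂ _ hne => T.fibers_disjoint w₁ w₂ hne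
  have hcard : (T.LFin infty v₀ hbase ((k+1)*N)).card =
      ∑ w ∈ T.LFin infty v₀ hbase (k*N), (T.finFibers w).toFinset.card := by
    rw [hfib]; exact Finset.card_biUnion hdisj
  have hS : T.Ssum infty v₀ hbase dE ((k+1)*N) =
      ∑ w ∈ T.LFin infty v₀ hbase (k*N), ∑ a ∈ (T.finFibers w).toFinset, (dV a - 1) := by
    rw [Ssum, hfib, Finset.sum_biUnion hdisj]
    apply Finset.sum_congr rfl
    intro w hw
    apply Finset.sum_congr rfl
    intro a ha
    have hamem : a ∈ T.LFin infty v₀ hbase ((k+1)*N) := by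
      rw [hfib, Finset.mem_biUnion]; exact ⟨w, hw, ha⟩
    have haneg : T.height infty v₀ a < 0 := by
      rw [T.mem_LFin infty v₀ hbase] at hamem
      have : 1 ≤ (k+1)*N := Nat.mul_pos (Nat.succ_pos k) hN0
      omega
    rw [← T.dV_eq_up infty v₀ hdeg hbase hN haneg]
  have hDgsum : ∑ w ∈ T.LFin infty v₀ hbase (k*N),
      ((T.finFibers w).toFinset.card + ∑ a ∈ (T.finFibers w).toFinset, (dV a - 1)) =
      ∑ _w ∈ T.LFin infty v₀ hbase (k*N), Dg := by
    apply Finset.sum_congr rfl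
    intro w _
    obtain ⟨w', hw'⟩ := T.exists_nbr infty v₀ hbase w
    exact T.fiber_card hdeg hDg hw'
  rw [Finset.sum_add_distrib] at hDgsum
  rw [Finset.sum_const, smul_eq_mul] at hDgsum
  rw [hcard, hS, mul_comm]
  omega

lemma card_upper [DecidableEq V] (hdeg : T.IsLocalDeg dV dE) (hDg : T.IsGlobalDeg dE Dg)
    (hbase : T.IsBase infty v₀) (hN0 : 0 < N)
    (hN : ∀ v : V, T.height infty v₀ (T.F v) = T.height infty v₀ v + (N : ℤ)) (k : ℕ) :
    (T.LFin infty v₀ hbase (k*N)).card ≤ Dg ^ k := by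
  induction k with
  | zero =>
    rw [Nat.zero_mul, T.LFin_zero infty v₀ hbase]
    simp
  | succ n ih =>
    have hstep := T.step_eq infty v₀ hdeg hDg hbase hN0 hN n
    have h1 : (T.LFin infty v₀ hbase ((n+1)*N)).card ≤ Dg * (T.LFin infty v₀ hbase (n*N)).card := by
      omega
    calc (T.LFin infty v₀ hbase ((n+1)*N)).card
        ≤ Dg * (T.LFin infty v₀ hbase (n*N)).card := h1
      _ ≤ Dg * Dg ^ n := Nat.mul_le_mul_left _ ih
      _ = Dg ^ (n+1) := by rw [pow_succ]; ring

lemma geomS (D : ℕ) : ∀ k : ℕ, 1 ≤ k →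
    D * (∑ i ∈ Finset.Ico 1 k, D ^ i) + D = (∑ i ∈ Finset.Ico 1 k, D ^ i) + D ^ k := by
  intro k hk
  induction k with
  | zero => omega
  | succ n ih =>
    by_cases hn : 1 ≤ n
    · have h := ih hn
      rw [Finset.sum_Ico_succ_top hn]
      have hexp : D * ((∑ i ∈ Finset.Ico 1 n, D ^ i) + D ^ n) + D =
          (D * (∑ i ∈ Finset.Ico 1 n, D ^ i) + D) + D * D ^ n := by ring
      rw [hexp, h, pow_succ]
      ring
    · have hn0 : n = 0 := by omega
      subst hn0
      simp [pow_one]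
  
lemma card_lower [DecidableEq V] (hdeg : T.IsLocalDeg dV dE) (hDg : T.IsGlobalDeg dE Dg)
    (hbase : T.IsBase infty v₀) (hN0 : 0 < N)
    (hN : ∀ v : V, T.height infty v₀ (T.F v) = T.height infty v₀ v + (N : ℤ)) :
    ∀ k : ℕ, 1 ≤ k →
      2 + (∑ i ∈ Finset.Ico 1 k, Dg ^ i) ≤ (T.LFin infty v₀ hbase (k*N)).card := by
  intro k hk
  induction k with
  | zero => omega
  | succ n ih =>
    by_cases hn : 1 ≤ n
    · -- inductive step
      have hstep := T.step_eq infty v₀ hdeg hDg hbase hN0 hN n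
      have hSle := T.Ssum_le infty v₀ hdeg hDg hbase hN0 hN ((n+1)*N)
        (Nat.mul_pos (Nat.succ_pos n) hN0)
      have hIH := ih hn
      have hmul : Dg * (2 + ∑ i ∈ Finset.Ico 1 n, Dg ^ i) ≤
          Dg * (T.LFin infty v₀ hbase (n*N)).card := Nat.mul_le_mul_left _ hIH
      have hgeom := geomS Dg n hn
      have hexp : Dg * (2 + ∑ i ∈ Finset.Ico 1 n, Dg ^ i) =
          (Dg * (∑ i ∈ Finset.Ico 1 n, Dg ^ i) + Dg) + Dg := by ring
      rw [hgeom] at hexp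
      rw [Finset.sum_Ico_succ_top hn]
      omega
    · have hn0 : n = 0 := by omega
      subst hn0
      have hstep := T.step_eq infty v₀ hdeg hDg hbase hN0 hN 0
      rw [Nat.zero_mul, T.LFin_zero infty v₀ hbase] at hstep
      have hSle := T.Ssum_le infty v₀ hdeg hDg hbase hN0 hN ((0+1)*N)
        (Nat.mul_pos (Nat.succ_pos 0) hN0)
      simp only [Finset.card_singleton, mul_one] at hstep
      simp only [Finset.Ico_self, Finset.sum_empty]
      omega

end TreeDyn
end AuxCount
/-- **Vertex counts at each level.**
Let `F : T → T` be a polynomial-like branched covering with global degree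
`Dg = deg F`, base `v₀`, and let `N` be the positive integer with
`h(F v) = h(v) + N`.  Let `V_k = {v : h(v) = −k·N}`.  Then for every `k ≥ 1`:
`Dg^k ≥ |V_k| ≥ 2 + Dg + Dg² + ⋯ + Dg^{k−1} ≥ Dg^k/(Dg − 1)`. -/
theorem vertex_count_bounds
    {V : Type} (T : TreeDyn V) (infty : T.G.end)
    (hpl : T.IsPolyLike infty)
    (dV : V → ℕ) (dE : V → V → ℕ) (hdeg : T.IsLocalDeg dV dE)
    (v₀ : V) (hbase : T.IsBase infty v₀)
    (Dg : ℕ) (hDg : T.IsGlobalDeg dE Dg)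
    (N : ℕ) (hN0 : 0 < N)
    (hN : ∀ v : V, T.height infty v₀ (T.F v) = T.height infty v₀ v + (N : ℤ))
    (k : ℕ) (hk : 1 ≤ k) :
    ({v : V | T.height infty v₀ v = -((k * N : ℕ) : ℤ)}.ncard ≤ Dg ^ k) ∧
    (2 + ∑ i ∈ Finset.Ico 1 k, Dg ^ i ≤
      {v : V | T.height infty v₀ v = -((k * N : ℕ) : ℤ)}.ncard) ∧
    ((Dg : ℚ) ^ k / ((Dg : ℚ) - 1) ≤ 2 + ∑ i ∈ Finset.Ico 1 k, (Dg : ℚ) ^ i) := by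
  classical
  have hncard : {v : V | T.height infty v₀ v = -((k * N : ℕ) : ℤ)}.ncard
      = (T.LFin infty v₀ hbase (k*N)).card := by
    rw [show {v : V | T.height infty v₀ v = -((k * N : ℕ) : ℤ)} = T.Lset infty v₀ (k*N) from rfl]
    rw [Set.ncard_eq_toFinset_card _ (T.Lset_finite infty v₀ hbase (k*N))]
    rfl
  have hDg2 : 2 ≤ Dg := T.two_le_Dg infty v₀ hdeg hDg hbase hN0 hN
  refine ⟨?_, ?_, ?_⟩
  · rw [hncard]
    exact T.card_upper infty v₀ hdeg hDg hbase hN0 hN k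
  · rw [hncard]
    exact T.card_lower infty v₀ hdeg hDg hbase hN0 hN k hk
  · have hQ : (1:ℚ) < (Dg:ℚ) := by
      have : 1 < Dg := by omega
      exact_mod_cast this
    have hne1 : (Dg:ℚ) ≠ 1 := ne_of_gt hQ
    have hpos : (0:ℚ) < (Dg:ℚ) - 1 := by linarith
    have hDk : (2:ℚ) ≤ (Dg:ℚ) := by exact_mod_cast hDg2
    have hpow : (Dg:ℚ) ≤ (Dg:ℚ) ^ k := by
      calc (Dg:ℚ) = (Dg:ℚ) ^ 1 := (pow_one _).symm
        _ ≤ (Dg:ℚ) ^ k := pow_le_pow_right₀ (by linarith) hk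
    rw [geom_sum_Ico hne1 hk, div_le_iff₀ hpos, add_mul,
      div_mul_cancel₀ _ (ne_of_gt hpos), pow_one]
    linarith
end

section
/- Let F : T₁ → T₂ be a branched covering between simplicial trees. Then F extends continuously to a map T₁ ∪ ∂T₁ → T₂ ∪ ∂T₂, and the induced map on ends F : ∂T₁ → ∂T₂ is open and surjective. -/
open SimpleGraph Function Opposite

open CategoryTheory
open scoped Classical

variable {V₁ V₂ : Type} {G₁ : SimpleGraph V₁} {G₂ : SimpleGraph V₂} {F : V₁ → V₂}

section BC
variable (hadj : ∀ ⦃v w : V₁⦄, G₁.Adj v w → G₂.Adj (F v) (F w))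
  (hsurj : ∀ ⦃v : V₁⦄ ⦃w' : V₂⦄, G₂.Adj (F v) w' → ∃ w : V₁, G₁.Adj v w ∧ F w = w')
  (hfib : ∀ v' : V₂, {v : V₁ | F v = v'}.Finite)

/-- finite preimage of a finite set -/
noncomputable def preimF (hfib : ∀ v' : V₂, {v : V₁ | F v = v'}.Finite) (K : Finset V₂) :
    Finset V₁ :=
  (Set.Finite.biUnion K.finite_toSet (fun w _ => hfib w)).toFinset

lemma mem_preimF {K : Finset V₂} {v : V₁} : v ∈ preimF hfib K ↔ F v ∈ K := by
  simp [preimF]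

lemma mem_preimF_coe {K : Finset V₂} {v : V₁} : v ∈ (preimF hfib K : Set V₁) ↔ F v ∈ (K : Set V₂) := by
  simp [preimF]

lemma preimF_mono {K L : Finset V₂} (h : K ⊆ L) :
    (preimF hfib K : Set V₁) ⊆ (preimF hfib L : Set V₁) := by
  intro v hv
  rw [mem_preimF_coe] at hv ⊢
  exact h hv

/-- The induced map on component complements. -/
noncomputable def Fcomp (hadj : ∀ ⦃v w : V₁⦄, G₁.Adj v w → G₂.Adj (F v) (F w))
    (hfib : ∀ v' : V₂, {v : V₁ | F v = v'}.Finite) (K : Finset V₂) :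
    G₁.ComponentCompl (preimF hfib K : Set V₁) → G₂.ComponentCompl (K : Set V₂) :=
  ComponentCompl.lift
    (fun v hv => G₂.componentComplMk (show F v ∉ (K : Set V₂) from fun h => hv (mem_preimF_coe hfib |>.mpr h)))
    (fun v w hv hw a => componentComplMk_eq_of_adj _ _ _ (hadj a))

lemma Fcomp_mk {K : Finset V₂} {v : V₁} (hv : v ∉ (preimF hfib K : Set V₁)) :
    Fcomp hadj hfib K (G₁.componentComplMk hv)
      = G₂.componentComplMk (show F v ∉ (K : Set V₂) from fun h => hv (mem_preimF_coe hfib |>.mpr h)) :=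
  rfl

lemma Fcomp_mk' {K : Finset V₂} {v : V₁} (hv : v ∉ (preimF hfib K : Set V₁))
    (hFv : F v ∉ (K : Set V₂)) :
    Fcomp hadj hfib K (G₁.componentComplMk hv) = G₂.componentComplMk hFv :=
  rfl

lemma Fcomp_natural {K L : Finset V₂} (h : K ⊆ L)
    (C : G₁.ComponentCompl (preimF hfib L : Set V₁)) :
    Fcomp hadj hfib K (C.hom (preimF_mono hfib h))
      = (Fcomp hadj hfib L C).hom (by exact_mod_cast h) := by
  refine ComponentCompl.ind (fun v hv => ?_) C
  rfl
end BC

section BC2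
variable (hadj : ∀ ⦃v w : V₁⦄, G₁.Adj v w → G₂.Adj (F v) (F w))
  (hsurj : ∀ ⦃v : V₁⦄ ⦃w' : V₂⦄, G₂.Adj (F v) w' → ∃ w : V₁, G₁.Adj v w ∧ F w = w')
  (hfib : ∀ v' : V₂, {v : V₁ | F v = v'}.Finite)

include hsurj in
/-- surjectivity of a branched covering -/
lemma F_surj (hc : G₂.Preconnected) (v₀ : V₁) : Surjective F := by
  intro w
  have : ∀ (w' : V₂), G₂.Reachable (F v₀) w' → ∃ u, F u = w' := by
    intro w' hr
    obtain ⟨p⟩ := hr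
    generalize hFv : F v₀ = a at p
    induction p generalizing v₀ with
    | nil => exact ⟨v₀, hFv⟩
    | cons h p ih =>
      rename_i a b c
      obtain ⟨u, hu, rfl⟩ := hsurj (hFv ▸ h)
      exact ih u rfl
  exact this w (hc _ w)

/-- two vertices joined by a walk avoiding K are in the same componentCompl -/
lemma walk_comp_eq {K : Set V₁} {v w : V₁} (p : G₁.Walk v w)
    (hp : ∀ x ∈ p.support, x ∉ K) :
    G₁.componentComplMk (hp v p.start_mem_support) = G₁.componentComplMk (hp w p.end_mem_support) := by
  induction p with
  | nil => rfl
  | cons h p ih =>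
    rename_i a b c
    have hb : b ∉ K := hp b (by simp)
    have := ih (fun x hx => hp x (by simp [hx]))
    exact (componentComplMk_eq_of_adj G₁ _ hb h).trans this

include hsurj in
/-- lifting walks: if `F v` and `w` are in the same component outside `K`, then `w` has a
preimage in the same component as `v` outside `preimF K`. -/
lemma lift_comp (K : Finset V₂) {v : V₁} (hv : F v ∉ (K : Set V₂)) {w : V₂} (hw : w ∉ (K : Set V₂))
    (hc : G₂.componentComplMk hv = G₂.componentComplMk hw) :
    ∃ (u : V₁) (hu : F u = w),
      G₁.componentComplMk (show v ∉ (preimF hfib K : Set V₁) from fun h => hv ((mem_preimF_coe hfib).mp h))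
        = G₁.componentComplMk (show u ∉ (preimF hfib K : Set V₁) from
            fun h => hw (hu ▸ (mem_preimF_coe hfib).mp h)) := by
  rw [ConnectedComponent.eq] at hc
  obtain ⟨p⟩ := hc
  -- p : Walk in induce Kᶜ from ⟨F v, hv⟩ to ⟨w, hw⟩
  suffices h : ∀ (a b : {x // x ∈ ((K : Set V₂))ᶜ}) (p : (G₂.induce ((K : Set V₂))ᶜ).Walk a b)
      (v : V₁) (hv : F v = a.val),
      ∃ (u : V₁) (hu : F u = b.val),
        G₁.componentComplMk (show v ∉ (preimF hfib K : Set V₁) from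
          fun h' => a.prop (hv ▸ (mem_preimF_coe hfib).mp h'))
        = G₁.componentComplMk (show u ∉ (preimF hfib K : Set V₁) from
          fun h' => b.prop (hu ▸ (mem_preimF_coe hfib).mp h')) by
    obtain ⟨u, hu, he⟩ := h ⟨F v, hv⟩ ⟨w, hw⟩ p v rfl
    exact ⟨u, hu, he⟩
  clear p v hv w hw
  intro a b p
  induction p with
  | nil =>
    intro v hv
    exact ⟨v, hv, rfl⟩
  | cons h p ih =>
    rename_i a c b
    intro v hv
    have hadj2 : G₂.Adj (F v) c.val := hv ▸ (comap_adj.mp h)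
    obtain ⟨u₁, hu₁adj, hu₁⟩ := hsurj hadj2
    obtain ⟨u, hu, he⟩ := ih u₁ hu₁
    refine ⟨u, hu, ?_⟩
    refine (componentComplMk_eq_of_adj G₁ _ _ hu₁adj).trans he
end BC2

section Fb
variable (hadj : ∀ ⦃v w : V₁⦄, G₁.Adj v w → G₂.Adj (F v) (F w))
  (hsurj : ∀ ⦃v : V₁⦄ ⦃w' : V₂⦄, G₂.Adj (F v) w' → ∃ w : V₁, G₁.Adj v w ∧ F w = w')
  (hfib : ∀ v' : V₂, {v : V₁ | F v = v'}.Finite)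

/-- The extension of `F` to the ends. -/
noncomputable def FbMap (hadj : ∀ ⦃v w : V₁⦄, G₁.Adj v w → G₂.Adj (F v) (F w))
    (hfib : ∀ v' : V₂, {v : V₁ | F v = v'}.Finite) (e : G₁.end) : G₂.end := by
  refine ⟨fun K => Fcomp hadj hfib K.unop (e.val (op (preimF hfib K.unop))), ?_⟩
  intro K L f
  have hKL : L.unop ⊆ K.unop := le_of_op_hom f
  have hle : preimF hfib L.unop ≤ preimF hfib K.unop := Finset.coe_subset.mp (preimF_mono hfib hKL)
  have hsec := e.prop (opHomOfLE hle)
  have hnat := Fcomp_natural hadj hfib hKL (e.val (op (preimF hfib K.unop)))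
  exact hnat.symm.trans (congrArg (Fcomp hadj hfib L.unop) hsec)

lemma FbMap_val (e : G₁.end) (K : (Finset V₂)ᵒᵖ) :
    (FbMap hadj hfib e).val K = Fcomp hadj hfib K.unop (e.val (op (preimF hfib K.unop))) := rfl
end Fb

section Ext
variable (hadj : ∀ ⦃v w : V₁⦄, G₁.Adj v w → G₂.Adj (F v) (F w))
  (hsurj : ∀ ⦃v : V₁⦄ ⦃w' : V₂⦄, G₂.Adj (F v) w' → ∃ w : V₁, G₁.Adj v w ∧ F w = w')
  (hfib : ∀ v' : V₂, {v : V₁ | F v = v'}.Finite)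

/-- the goodness predicate -/
def Good (hadj : ∀ ⦃v w : V₁⦄, G₁.Adj v w → G₂.Adj (F v) (F w))
    (hfib : ∀ v' : V₂, {v : V₁ | F v = v'}.Finite)
    (f : G₂.end) (L₀ : Finset V₁) (C₀ : G₁.ComponentCompl (L₀ : Set V₁)) (L : Finset V₁)
    (D : G₁.ComponentCompl ((L ∪ L₀ : Finset V₁) : Set V₁)) : Prop :=
  D.hom (Finset.coe_subset.mpr Finset.subset_union_right) = C₀ ∧
  ∀ (K : Finset V₂) (h : (preimF hfib K : Set V₁) ⊆ ((L ∪ L₀ : Finset V₁) : Set V₁)),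
    Fcomp hadj hfib K (D.hom h) = f.val (op K)

lemma good_hom {f : G₂.end} {L₀ : Finset V₁} {C₀ : G₁.ComponentCompl (L₀ : Set V₁)}
    {L L' : Finset V₁} (hLL : L ⊆ L')
    {D : G₁.ComponentCompl ((L' ∪ L₀ : Finset V₁) : Set V₁)}
    (hD : Good hadj hfib f L₀ C₀ L' D) :
    Good hadj hfib f L₀ C₀ L
      (D.hom (Finset.coe_subset.mpr (Finset.union_subset_union_left hLL))) := by
  constructor
  · rw [← ComponentCompl.hom_trans D
      (Finset.coe_subset.mpr (Finset.union_subset_union_left hLL))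
      (Finset.coe_subset.mpr Finset.subset_union_right)]
    exact hD.1
  · intro K h
    rw [← ComponentCompl.hom_trans D
      (Finset.coe_subset.mpr (Finset.union_subset_union_left hLL)) h]
    exact hD.2 K _

/-- The functor of good components. -/
noncomputable def goodFunctor (f : G₂.end) (L₀ : Finset V₁)
    (C₀ : G₁.ComponentCompl (L₀ : Set V₁)) : (Finset V₁)ᵒᵖ ⥤ Type where
  obj L := {D : G₁.ComponentCompl ((L.unop ∪ L₀ : Finset V₁) : Set V₁) //
    Good hadj hfib f L₀ C₀ L.unop D}
  map {L L'} g := TypeCat.ofHom fun D =>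
    ⟨D.val.hom (Finset.coe_subset.mpr (Finset.union_subset_union_left (le_of_op_hom g))),
      good_hom hadj hfib (le_of_op_hom g) D.prop⟩
  map_id L := by
    ext1; ext1; funext D
    apply Subtype.ext
    exact ComponentCompl.hom_refl D.val
  map_comp {L L' L''} g g' := by
    ext1; ext1; funext D
    apply Subtype.ext
    exact (ComponentCompl.hom_trans D.val
      (Finset.coe_subset.mpr (Finset.union_subset_union_left (le_of_op_hom g)))
      (Finset.coe_subset.mpr (Finset.union_subset_union_left (le_of_op_hom g'))))
end Ext

section Ext2
variable (hadj : ∀ ⦃v w : V₁⦄, G₁.Adj v w → G₂.Adj (F v) (F w))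
  (hsurj : ∀ ⦃v : V₁⦄ ⦃w' : V₂⦄, G₂.Adj (F v) w' → ∃ w : V₁, G₁.Adj v w ∧ F w = w')
  (hfib : ∀ v' : V₂, {v : V₁ | F v = v'}.Finite)

lemma good_nonempty (hconn₁ : G₁.Preconnected) (hlf₁ : ∀ v : V₁, (G₁.neighborSet v).Finite)
    (f : G₂.end) (L₀ : Finset V₁) (C₀ : G₁.ComponentCompl (L₀ : Set V₁))
    (Hyp : ∀ (M : Finset V₁) (K : Finset V₂), ∃ v : V₁, v ∉ (M : Set V₁) ∧ v ∈ C₀ ∧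
      ∃ hK : F v ∉ (K : Set V₂), G₂.componentComplMk hK = f.val (op K))
    (L : Finset V₁) :
    Nonempty {D : G₁.ComponentCompl ((L ∪ L₀ : Finset V₁) : Set V₁) //
      Good hadj hfib f L₀ C₀ L D} := by
  haveI : LocallyFinite G₁ := fun v => (hlf₁ v).fintype
  haveI : Fact G₁.Preconnected := ⟨hconn₁⟩
  haveI : Finite (G₁.ComponentCompl ((L ∪ L₀ : Finset V₁) : Set V₁)) :=
    G₁.componentCompl_finite (L ∪ L₀)
  set S : Finset V₂ → Set (G₁.ComponentCompl ((L ∪ L₀ : Finset V₁) : Set V₁)) := fun K =>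
    {D | D.hom (Finset.coe_subset.mpr Finset.subset_union_right) = C₀ ∧
      ∀ h : (preimF hfib K : Set V₁) ⊆ ((L ∪ L₀ : Finset V₁) : Set V₁),
        Fcomp hadj hfib K (D.hom h) = f.val (op K)} with hS
  set Rel : Finset V₂ → Prop :=
    fun K => (preimF hfib K : Set V₁) ⊆ ((L ∪ L₀ : Finset V₁) : Set V₁) with hRel
  -- nonemptiness of each S K
  have SNE : ∀ K : Finset V₂, (S K).Nonempty := by
    intro K
    obtain ⟨v, hvM, hvC, hFv, hmk⟩ := Hyp (L ∪ L₀) K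
    obtain ⟨hvL₀, hC⟩ := hvC
    exact ⟨G₁.componentComplMk hvM, hC, fun h => hmk⟩
  -- monotonicity
  have Smono : ∀ (K K'' : Finset V₂), K ⊆ K'' → Rel K'' → S K'' ⊆ S K := by
    intro K K'' hKK hK'' D hD
    refine ⟨hD.1, ?_⟩
    intro h
    have hnat := Fcomp_natural hadj hfib hKK (D.hom hK'')
    have step1 : Fcomp hadj hfib K (D.hom h)
        = Fcomp hadj hfib K ((D.hom hK'').hom (preimF_mono hfib hKK)) := by
      congr 1
      exact (ComponentCompl.hom_trans D hK'' (preimF_mono hfib hKK))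
    have step3 := f.prop (opHomOfLE hKK : op K'' ⟶ op K)
    exact step1.trans (hnat.trans
      ((congrArg _ (hD.2 hK'')).trans step3))
  -- union of relevant is relevant
  have Relu : ∀ (K K' : Finset V₂), Rel K → Rel K' → Rel (K ∪ K') := by
    intro K K' hK hK' v hv
    rw [mem_preimF_coe] at hv
    rcases Finset.mem_union.mp hv with h | h
    · exact hK ((mem_preimF_coe hfib).mpr h)
    · exact hK' ((mem_preimF_coe hfib).mpr h)
  have hne : Rel ∅ := by
    intro v hv
    rw [mem_preimF_coe] at hv
    simp at hv
  -- minimal element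
  set 𝒮 : Set (Set (G₁.ComponentCompl ((L ∪ L₀ : Finset V₁) : Set V₁))) :=
    S '' {K | Rel K} with h𝒮
  obtain ⟨A, ⟨K₀, hK₀, rfl⟩, hmin⟩ :=
    Set.Finite.exists_minimalFor id 𝒮 (Set.toFinite _) ⟨S ∅, ⟨∅, hne, rfl⟩⟩
  have key : ∀ K : Finset V₂, Rel K → S K₀ ⊆ S K := by
    intro K hK
    have hRelu : Rel (K₀ ∪ K) := Relu K₀ K hK₀ hK
    have h1 : S (K₀ ∪ K) ⊆ S K₀ := Smono K₀ (K₀ ∪ K) Finset.subset_union_left hRelu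
    have h2 : S (K₀ ∪ K) ⊆ S K := Smono K (K₀ ∪ K) Finset.subset_union_right hRelu
    have := hmin ⟨K₀ ∪ K, hRelu, rfl⟩ h1
    exact (show S K₀ ⊆ S (K₀ ∪ K) from this).trans h2
  obtain ⟨D, hD⟩ := SNE K₀
  refine ⟨D, hD.1, ?_⟩
  intro K h
  exact (key K h hD).2 h
end Ext2

section Ext3
variable (hadj : ∀ ⦃v w : V₁⦄, G₁.Adj v w → G₂.Adj (F v) (F w))
  (hsurj : ∀ ⦃v : V₁⦄ ⦃w' : V₂⦄, G₂.Adj (F v) w' → ∃ w : V₁, G₁.Adj v w ∧ F w = w')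
  (hfib : ∀ v' : V₂, {v : V₁ | F v = v'}.Finite)

lemma extension (hconn₁ : G₁.Preconnected) (hlf₁ : ∀ v : V₁, (G₁.neighborSet v).Finite)
    (f : G₂.end) (L₀ : Finset V₁) (C₀ : G₁.ComponentCompl (L₀ : Set V₁))
    (Hyp : ∀ (M : Finset V₁) (K : Finset V₂), ∃ v : V₁, v ∉ (M : Set V₁) ∧ v ∈ C₀ ∧
      ∃ hK : F v ∉ (K : Set V₂), G₂.componentComplMk hK = f.val (op K)) :
    ∃ e : G₁.end, e.val (op L₀) = C₀ ∧ FbMap hadj hfib e = f := by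
  haveI : LocallyFinite G₁ := fun v => (hlf₁ v).fintype
  haveI : Fact G₁.Preconnected := ⟨hconn₁⟩
  haveI hFin : ∀ L : (Finset V₁)ᵒᵖ, Finite ((goodFunctor hadj hfib f L₀ C₀).obj L) := by
    intro L
    haveI : Finite (G₁.ComponentCompl ((L.unop ∪ L₀ : Finset V₁) : Set V₁)) :=
      G₁.componentCompl_finite (L.unop ∪ L₀)
    exact Subtype.finite
  haveI hNE : ∀ L : (Finset V₁)ᵒᵖ, Nonempty ((goodFunctor hadj hfib f L₀ C₀).obj L) :=
    fun L => good_nonempty hadj hfib hconn₁ hlf₁ f L₀ C₀ Hyp L.unop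
  obtain ⟨s, hs⟩ := nonempty_sections_of_finite_inverse_system (goodFunctor hadj hfib f L₀ C₀)
  refine ⟨⟨fun L => (s L).val.hom (Finset.coe_subset.mpr Finset.subset_union_left), ?_⟩, ?_, ?_⟩
  · -- section property
    intro K L g
    have hcomp : ((goodFunctor hadj hfib f L₀ C₀).map g (s K)) = s L := hs g
    have hv : (s K).val.hom
        (Finset.coe_subset.mpr (Finset.union_subset_union_left (le_of_op_hom g)))
        = (s L).val := congrArg Subtype.val hcomp
    have aK : ((K.unop : Finset V₁) : Set V₁) ⊆ ((K.unop ∪ L₀ : Finset V₁) : Set V₁) :=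
      Finset.coe_subset.mpr Finset.subset_union_left
    have aL : ((L.unop : Finset V₁) : Set V₁) ⊆ ((L.unop ∪ L₀ : Finset V₁) : Set V₁) :=
      Finset.coe_subset.mpr Finset.subset_union_left
    have c : ((L.unop ∪ L₀ : Finset V₁) : Set V₁) ⊆ ((K.unop ∪ L₀ : Finset V₁) : Set V₁) :=
      Finset.coe_subset.mpr (Finset.union_subset_union_left (le_of_op_hom g))
    have e1 : ComponentCompl.hom (le_of_op_hom g : (L.unop : Set V₁) ⊆ (K.unop : Set V₁))
        ((s K).val.hom aK) = (s K).val.hom ((le_of_op_hom g :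
          (L.unop : Set V₁) ⊆ (K.unop : Set V₁)).trans aK) :=
      (ComponentCompl.hom_trans (s K).val aK (le_of_op_hom g)).symm
    have e2 : (s K).val.hom (aL.trans c) = ((s K).val.hom c).hom aL :=
      ComponentCompl.hom_trans (s K).val c aL
    exact e1.trans (e2.trans (congrArg (ComponentCompl.hom aL) hv))
  · -- value at L₀
    exact (s (op L₀)).prop.1
  · -- commutation with f
    refine Subtype.ext (funext fun K => ?_)
    exact (s (op (preimF hfib K.unop))).prop.2 K.unop
      (Finset.coe_subset.mpr Finset.subset_union_left)
end Ext3

lemma endTop_le_coord {V : Type} (G : SimpleGraph V) (L : (Finset V)ᵒᵖ) :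
    endTop G ≤ TopologicalSpace.induced (fun e : G.end => e.val L) ⊥ := by
  unfold endTop
  rw [induced_iInf]
  exact le_trans (iInf_le _ L) (le_of_eq (induced_compose))

lemma cyl_open {V : Type} (G : SimpleGraph V) (L : (Finset V)ᵒᵖ)
    (C : G.ComponentCompl (L.unop : Set V)) :
    @IsOpen _ (endTop G) {e : G.end | e.val L = C} := by
  refine endTop_le_coord G L _ ?_
  rw [@isOpen_induced_iff _ _ ⊥ _ _]
  exact ⟨{C}, trivial, rfl⟩

section Cont
variable (hadj : ∀ ⦃v w : V₁⦄, G₁.Adj v w → G₂.Adj (F v) (F w))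
  (hfib : ∀ v' : V₂, {v : V₁ | F v = v'}.Finite)

lemma Fb_cont : @Continuous _ _ (endTop G₁) (endTop G₂) (FbMap hadj hfib) := by
  rw [continuous_iff_le_induced]
  conv_rhs => rw [endTop, induced_compose, induced_iInf]
  refine le_iInf fun K => ?_
  rw [induced_compose]
  have h2 : (TopologicalSpace.induced (fun e : G₁.end => e.val (op (preimF hfib K.unop))) ⊥ :
      TopologicalSpace G₁.end) ≤ TopologicalSpace.induced
        (fun e : G₁.end => (FbMap hadj hfib e).val K) ⊥ := by
    have : (fun e : G₁.end => (FbMap hadj hfib e).val K)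
        = (Fcomp hadj hfib K.unop) ∘ (fun e : G₁.end => e.val (op (preimF hfib K.unop))) := rfl
    rw [this]
    intro s hs
    obtain ⟨T, -, rfl⟩ := (@isOpen_induced_iff _ _ ⊥ _ _).mp hs
    exact (@isOpen_induced_iff _ _ ⊥ _ _).mpr ⟨Fcomp hadj hfib K.unop ⁻¹' T, trivial, rfl⟩
  exact le_trans (endTop_le_coord G₁ (op (preimF hfib K.unop))) h2
end Cont

lemma cyl_basis {V : Type} (G : SimpleGraph V) {U : Set G.end}
    (hU : @IsOpen _ (endTop G) U) {e : G.end} (he : e ∈ U) :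
    ∃ L : Finset V, ∀ e' : G.end, e'.val (op L) = e.val (op L) → e' ∈ U := by
  classical
  obtain ⟨W, hW, rfl⟩ := (@isOpen_induced_iff _ _
    (⨅ K : (Finset V)ᵒᵖ, TopologicalSpace.induced
      (fun f : (∀ j : (Finset V)ᵒᵖ, G.componentComplFunctor.obj j) => f K) ⊥)
    U Subtype.val).mp hU
  letI tau : TopologicalSpace (∀ j : (Finset V)ᵒᵖ, G.componentComplFunctor.obj j) :=
    ⨅ K : (Finset V)ᵒᵖ, TopologicalSpace.induced (fun f => f K) ⊥
  have he2 : e.val ∈ W := he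
  have hWn : W ∈ @nhds _ tau e.val := @IsOpen.mem_nhds _ tau _ _ hW he2
  have heq : @nhds _ tau e.val = ⨅ K : (Finset V)ᵒᵖ, @nhds _ (TopologicalSpace.induced
      (fun f : (∀ j : (Finset V)ᵒᵖ, G.componentComplFunctor.obj j) => f K) ⊥) e.val :=
    @nhds_iInf _ _ _ _
  rw [heq, Filter.mem_iInf] at hWn
  obtain ⟨I, hIfin, Vs, hVs, rfl⟩ := hWn
  refine ⟨hIfin.toFinset.sup unop, fun e' he' => ?_⟩
  rw [Set.mem_preimage, Set.mem_iInter]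
  intro i
  have hVi := hVs i
  rw [@mem_nhds_iff _ (TopologicalSpace.induced
      (fun f : (∀ j : (Finset V)ᵒᵖ, G.componentComplFunctor.obj j) => f i.val) ⊥)] at hVi
  obtain ⟨O, hOsub, hOopen, hxO⟩ := hVi
  obtain ⟨T, -, rfl⟩ := (@isOpen_induced_iff _ _ ⊥ _ _).mp hOopen
  refine hOsub ?_
  rw [Set.mem_preimage] at hxO ⊢
  have hle : (i.val).unop ≤ hIfin.toFinset.sup unop :=
    Finset.le_sup (hIfin.mem_toFinset.mpr i.prop)
  have h1 := e'.prop (opHomOfLE hle : op (hIfin.toFinset.sup unop) ⟶ op (i.val).unop)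
  have h2 := e.prop (opHomOfLE hle : op (hIfin.toFinset.sup unop) ⟶ op (i.val).unop)
  have hcoord : e'.val i.val = e.val i.val := by
    rw [← h1, ← h2, he']
  rw [hcoord]
  exact hxO

section Main
variable (hadj : ∀ ⦃v w : V₁⦄, G₁.Adj v w → G₂.Adj (F v) (F w))
  (hsurj : ∀ ⦃v : V₁⦄ ⦃w' : V₂⦄, G₂.Adj (F v) w' → ∃ w : V₁, G₁.Adj v w ∧ F w = w')
  (hfib : ∀ v' : V₂, {v : V₁ | F v = v'}.Finite)

include hsurj in
lemma Fb_surj (hconn₁ : G₁.Preconnected) (hconn₂ : G₂.Preconnected)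
    (hlf₁ : ∀ v : V₁, (G₁.neighborSet v).Finite) (v₀ : V₁) :
    Surjective (FbMap hadj hfib) := by
  intro f
  have hv₀ : v₀ ∉ ((∅ : Finset V₁) : Set V₁) := by simp
  have Hyp : ∀ (M : Finset V₁) (K : Finset V₂), ∃ v : V₁, v ∉ (M : Set V₁) ∧
      v ∈ G₁.componentComplMk hv₀ ∧
      ∃ hK : F v ∉ (K : Set V₂), G₂.componentComplMk hK = f.val (op K) := by
    intro M K
    have hinf := G₂.end_componentCompl_infinite f (op K)
    obtain ⟨w, hw1, hw2⟩ := (hinf.diff (M.finite_toSet.image F)).nonempty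
    obtain ⟨hK, hmk⟩ := hw1
    obtain ⟨u, rfl⟩ := F_surj hsurj hconn₂ v₀ w
    refine ⟨u, fun h => hw2 ⟨u, h, rfl⟩, ?_, hK, hmk⟩
    obtain ⟨p⟩ := hconn₁ u v₀
    have hu : u ∉ ((∅ : Finset V₁) : Set V₁) := by simp
    exact ⟨hu, walk_comp_eq p (fun x _ => by simp)⟩
  obtain ⟨e, -, he⟩ := extension hadj hfib hconn₁ hlf₁ f ∅ (G₁.componentComplMk hv₀) Hyp
  exact ⟨e, he⟩

include hsurj in
lemma open_key (hconn₁ : G₁.Preconnected) (hlf₁ : ∀ v : V₁, (G₁.neighborSet v).Finite)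
    (e : G₁.end) (K' : Finset V₁) :
    ∃ K₂ : Finset V₂, ∀ f' : G₂.end,
      f'.val (op K₂) = (FbMap hadj hfib e).val (op K₂) →
      ∃ e' : G₁.end, e'.val (op K') = e.val (op K') ∧ FbMap hadj hfib e' = f' := by
  classical
  refine ⟨K'.image F, fun f' hf' => ?_⟩
  set K₂ : Finset V₂ := K'.image F with hK₂
  set L₀ : Finset V₁ := preimF hfib K₂ with hL₀
  have hK'L₀ : K' ≤ L₀ := by
    intro v hv
    exact (mem_preimF hfib).mpr (Finset.mem_image_of_mem F hv)
  set C₀ : G₁.ComponentCompl (L₀ : Set V₁) := e.val (op L₀) with hC₀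
  have Hyp : ∀ (M : Finset V₁) (K : Finset V₂), ∃ v : V₁, v ∉ (M : Set V₁) ∧ v ∈ C₀ ∧
      ∃ hK : F v ∉ (K : Set V₂), G₂.componentComplMk hK = f'.val (op K) := by
    intro M K
    obtain ⟨v₀, hv₀L₀, hv₀⟩ := C₀.exists_eq_mk
    have hinf := G₂.end_componentCompl_infinite f' (op (K ∪ K₂))
    obtain ⟨w, hw1, hw2⟩ := (hinf.diff ((M ∪ L₀).finite_toSet.image F)).nonempty
    obtain ⟨hwKK₂, hwmk⟩ := hw1
    have hwK₂ : w ∉ (K₂ : Set V₂) := fun h => hwKK₂ (by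
      simp only [Finset.coe_union, Set.mem_union]; exact Or.inr h)
    have hwK : w ∉ (K : Set V₂) := fun h => hwKK₂ (by
      simp only [Finset.coe_union, Set.mem_union]; exact Or.inl h)
    -- w's component at K₂ is f' K₂
    have h1 : f'.val (op K₂) = G₂.componentComplMk hwK₂ :=
      G₂.end_hom_mk_of_mk f'.prop
        (opHomOfLE Finset.subset_union_right : op (K ∪ K₂) ⟶ op K₂) hwKK₂ hwmk.symm
    -- w's component at K is f' K
    have h1K : f'.val (op K) = G₂.componentComplMk hwK :=
      G₂.end_hom_mk_of_mk f'.prop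
        (opHomOfLE Finset.subset_union_left : op (K ∪ K₂) ⟶ op K) hwKK₂ hwmk.symm
    -- F v₀'s component at K₂ is also f' K₂
    have hFv₀ : F v₀ ∉ (K₂ : Set V₂) := fun h =>
      hv₀L₀ ((mem_preimF_coe hfib).mpr h)
    have h3 : G₂.componentComplMk hFv₀ = G₂.componentComplMk hwK₂ := by
      have hq : Fcomp hadj hfib K₂ C₀ = G₂.componentComplMk hwK₂ := hf'.symm.trans h1
      rw [← hv₀] at hq
      exact hq
    obtain ⟨u, huw, hucomp⟩ := lift_comp hsurj hfib K₂ hFv₀ hwK₂ h3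
    have huL₀ : u ∉ (L₀ : Set V₁) := fun h => hwK₂ (huw ▸ (mem_preimF_coe hfib).mp h)
    refine ⟨u, ?_, ⟨huL₀, hucomp.symm.trans hv₀⟩, huw ▸ hwK, huw ▸ h1K.symm⟩
    intro h
    exact hw2 ⟨u, by simp only [Finset.coe_union, Set.mem_union]; exact Or.inl h, huw⟩
  obtain ⟨e', he'L₀, he'f⟩ := extension hadj hfib hconn₁ hlf₁ f' L₀ C₀ Hyp
  refine ⟨e', ?_, he'f⟩
  have h1 := e'.prop (opHomOfLE hK'L₀ : op L₀ ⟶ op K')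
  have h2 := e.prop (opHomOfLE hK'L₀ : op L₀ ⟶ op K')
  rw [← h1, ← h2, he'L₀]
end Main


/-- **Branched coverings extend to the ends.**
Let `F : T₁ → T₂` be a branched covering between locally finite simplicial
trees: a simplicial map such that for every vertex `v`, the induced map on
edges adjacent to `v` surjects onto the edges adjacent to `F v`, and every
vertex has finitely many preimages.  Then `F` extends continuously to the
end compactifications: there is an induced map `Fb : ∂T₁ → ∂T₂`, compatible
with `F` (the `F`-image of the direction of an end `e` towards any finite set
`K` eventually lies in the direction of `Fb e`), which is continuous, open
and surjective. -/
theorem branched_covering_extends_to_ends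
    {V₁ V₂ : Type} (G₁ : SimpleGraph V₁) (G₂ : SimpleGraph V₂)
    (h₁ : G₁.IsTree) (h₂ : G₂.IsTree)
    (hlf₁ : ∀ v : V₁, (G₁.neighborSet v).Finite)
    (hlf₂ : ∀ v : V₂, (G₂.neighborSet v).Finite)
    (F : V₁ → V₂)
    (hadj : ∀ ⦃v w : V₁⦄, G₁.Adj v w → G₂.Adj (F v) (F w))
    (hsurj : ∀ ⦃v : V₁⦄ ⦃w' : V₂⦄, G₂.Adj (F v) w' → ∃ w : V₁, G₁.Adj v w ∧ F w = w')
    (hfib : ∀ v' : V₂, {v : V₁ | F v = v'}.Finite) :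
    ∃ Fb : G₁.end → G₂.end,
      (∀ (e : G₁.end) (K : Finset V₂), ∃ K' : Finset V₁,
        ∀ (v : V₁) (hv : v ∉ (K' : Set V₁)),
          G₁.componentComplMk hv = e.val (op K') →
          ∃ hFv : F v ∉ (K : Set V₂),
            G₂.componentComplMk hFv = (Fb e).val (op K)) ∧
      @Continuous _ _ (endTop G₁) (endTop G₂) Fb ∧
      @IsOpenMap _ _ (endTop G₁) (endTop G₂) Fb ∧
      Surjective Fb := by
  have hconn₁ : G₁.Preconnected := h₁.isConnected.preconnected
  have hconn₂ : G₂.Preconnected := h₂.isConnected.preconnected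
  obtain ⟨v₀⟩ : Nonempty V₁ := h₁.isConnected.nonempty
  refine ⟨FbMap hadj hfib, ?_, Fb_cont hadj hfib, ?_, Fb_surj hadj hsurj hfib hconn₁ hconn₂ hlf₁ v₀⟩
  · -- compatibility
    intro e K
    refine ⟨preimF hfib K, fun v hv hmk => ?_⟩
    have hFv : F v ∉ (K : Set V₂) := fun h => hv ((mem_preimF_coe hfib).mpr h)
    refine ⟨hFv, ?_⟩
    have : (FbMap hadj hfib e).val (op K) = Fcomp hadj hfib K (e.val (op (preimF hfib K))) := rfl
    rw [this, ← hmk]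
    rfl
  · -- openness
    intro U hU
    rw [@isOpen_iff_forall_mem_open _ (endTop G₂)]
    rintro f ⟨e, heU, rfl⟩
    obtain ⟨K', hK'⟩ := cyl_basis G₁ hU heU
    obtain ⟨K₂, hK₂⟩ := open_key hadj hsurj hfib hconn₁ hlf₁ e K'
    refine ⟨{f' : G₂.end | f'.val (op K₂) = (FbMap hadj hfib e).val (op K₂)}, ?_,
      cyl_open G₂ (op K₂) _, rfl⟩
    intro f' hf'
    obtain ⟨e', he'K', he'f⟩ := hK₂ f' hf'
    exact ⟨e', hK' e' he'K', he'f⟩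
end

section
/- Let F : T → T be a polynomial-like branched covering of a simplicial tree. Then the Julia set J(F) = ∂T ∖ {∞}, with the subspace topology from the space of ends ∂T, is nonempty, compact, perfect, and totally disconnected (hence homeomorphic to a Cantor set). -/
open SimpleGraph Function Opposite

/-- The Julia set of `T`: the set of ends other than `infty`. -/
def JSet {V : Type} (T : TreeDyn V) (infty : T.G.end) : Type :=
  {p : T.G.end // p ≠ infty}

/-- The topology on the Julia set, induced from the topology on ends. -/
noncomputable def JTop {V : Type} (T : TreeDyn V) (infty : T.G.end) :
    TopologicalSpace (JSet T infty) :=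
  TopologicalSpace.induced Subtype.val (endTop T.G)

/-- The Borel σ-algebra on the Julia set. -/
noncomputable def JBorel {V : Type} (T : TreeDyn V) (infty : T.G.end) :
    MeasurableSpace (JSet T infty) :=
  @borel (JSet T infty) (JTop T infty)


section AuxCantor

open CategoryTheory

private lemma TreeAux.lemA {V : Type} {G : SimpleGraph V} (hc : G.Connected) (ha : G.IsAcyclic)
    (v : V) {a b : V} (hab : G.Adj a b) : G.dist a v ≠ G.dist b v := by
  classical
  intro h
  obtain ⟨p, hp, hl⟩ := hc.exists_path_of_dist a v
  by_cases hb : b ∈ p.support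
  · have h1 : (p.takeUntil b hb).length + (p.dropUntil b hb).length = p.length := by
      rw [← SimpleGraph.Walk.length_append, p.take_spec hb]
    have h2 : (p.takeUntil b hb).length ≠ 0 := by
      intro h0
      exact hab.ne ((p.takeUntil b hb).eq_of_length_eq_zero h0)
    have h3 : G.dist b v ≤ (p.dropUntil b hb).length := SimpleGraph.dist_le _
    omega
  · have hq : (SimpleGraph.Walk.cons hab.symm p).IsPath := hp.cons hb
    obtain ⟨q, hqp, hql⟩ := hc.exists_path_of_dist b v
    have := SimpleGraph.isAcyclic_iff_path_unique.mp ha ⟨_, hq⟩ ⟨q, hqp⟩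
    have hlen := congrArg (fun r : G.Path b v => r.val.length) this
    simp only [SimpleGraph.Walk.length_cons] at hlen
    omega

private lemma TreeAux.lemC {V : Type} {G : SimpleGraph V} (hc : G.Connected) (ha : G.IsAcyclic)
    (v : V) {x y z : V} (hxy : G.Adj x y) (hxz : G.Adj x z)
    (hy : G.dist y v + 1 = G.dist x v) (hz : G.dist z v + 1 = G.dist x v) : y = z := by
  classical
  obtain ⟨py, hpy, hly⟩ := hc.exists_path_of_dist y v
  obtain ⟨pz, hpz, hlz⟩ := hc.exists_path_of_dist z v
  have hxpy : x ∉ py.support := by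
    intro hmem
    have : G.dist x v ≤ py.length :=
      le_trans (SimpleGraph.dist_le _) (SimpleGraph.Walk.length_dropUntil_le py hmem)
    omega
  have hxpz : x ∉ pz.support := by
    intro hmem
    have : G.dist x v ≤ pz.length :=
      le_trans (SimpleGraph.dist_le _) (SimpleGraph.Walk.length_dropUntil_le pz hmem)
    omega
  have h1 : (SimpleGraph.Walk.cons hxy py).IsPath := hpy.cons hxpy
  have h2 : (SimpleGraph.Walk.cons hxz pz).IsPath := hpz.cons hxpz
  have heq := SimpleGraph.isAcyclic_iff_path_unique.mp ha ⟨_, h1⟩ ⟨_, h2⟩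
  have := congrArg (fun r : G.Path x v => r.val.getVert 1) heq
  simpa [SimpleGraph.Walk.getVert_cons_succ] using this

private lemma TreeAux.lemE {V : Type} {G : SimpleGraph V} (hc : G.Connected) (ha : G.IsAcyclic)
    (v : V) {x y z : V} (hxy : G.Adj x y) (hxz : G.Adj x z) (hyz : y ≠ z) :
    ∃ w : V, G.Adj x w ∧ G.dist w v = G.dist x v + 1 := by
  have key : ∀ u : V, G.Adj x u → G.dist u v = G.dist x v + 1 ∨ G.dist u v + 1 = G.dist x v := by
    intro u hu
    have h1 : G.dist u v ≤ G.dist u x + G.dist x v := hc.dist_triangle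
    have h2 : G.dist x v ≤ G.dist x u + G.dist u v := hc.dist_triangle
    have h3 : G.dist u x = 1 := SimpleGraph.dist_eq_one_iff_adj.mpr hu.symm
    have h4 : G.dist x u = 1 := SimpleGraph.dist_eq_one_iff_adj.mpr hu
    have h5 : G.dist u v ≠ G.dist x v := fun h => TreeAux.lemA hc ha v hu (h.symm)
    omega
  rcases key y hxy with hy | hy
  · exact ⟨y, hxy, hy⟩
  · rcases key z hxz with hz | hz
    · exact ⟨z, hxz, hz⟩
    · exact absurd (TreeAux.lemC hc ha v hxy hxz hy hz) hyz

private lemma TreeAux.two_neighbors {V : Type} {G : SimpleGraph V} (hc : G.Connected)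
    (locfin : ∀ v : V, (G.neighborSet v).Finite)
    (hval : ∀ v : V, (G.neighborSet v).ncard ≠ 1)
    [Nontrivial V] (x : V) :
    ∃ y z : V, G.Adj x y ∧ G.Adj x z ∧ y ≠ z := by
  obtain ⟨y₀, hy₀⟩ := exists_ne x
  obtain ⟨p⟩ := hc.preconnected x y₀
  have hlen : 0 < p.length := by
    rcases Nat.eq_zero_or_pos p.length with h | h
    · exact absurd (p.eq_of_length_eq_zero h).symm hy₀
    · exact h
  have hadj : G.Adj x (p.getVert 1) := by simpa using p.adj_getVert_succ hlen
  have hne : (G.neighborSet x).Nonempty := ⟨_, hadj⟩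
  have h1 : 1 < (G.neighborSet x).ncard := by
    have := (Set.ncard_pos (locfin x)).mpr hne
    have := hval x
    omega
  obtain ⟨a, b, ha, hb, hab⟩ := (Set.one_lt_ncard_iff (locfin x)).mp h1
  exact ⟨a, b, ha, hb, hab⟩

private lemma TreeAux.comp_infinite {V : Type} {G : SimpleGraph V} (hc : G.Connected)
    (ha : G.IsAcyclic)
    (locfin : ∀ v : V, (G.neighborSet v).Finite)
    (hval : ∀ v : V, (G.neighborSet v).ncard ≠ 1)
    [Nontrivial V] (w₀ : V) (C : G.ComponentCompl (↑({w₀} : Finset V))) :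
    C.supp.Infinite := by
  classical
  have next : ∀ x : V, x ∈ C.supp →
      ∃ z : V, z ∈ C.supp ∧ G.dist z w₀ = G.dist x w₀ + 1 := by
    rintro x hx
    obtain ⟨y, z, hxy, hxz, hyz⟩ := TreeAux.two_neighbors hc locfin hval x
    obtain ⟨w, hxw, hw⟩ := TreeAux.lemE hc ha w₀ hxy hxz hyz
    have hwne : w ∉ (↑({w₀} : Finset V) : Set V) := by
      simp only [Finset.coe_singleton, Set.mem_singleton_iff]
      intro h
      subst h
      simp [SimpleGraph.dist_self] at hw
    exact ⟨w, SimpleGraph.ComponentCompl.mem_of_adj x w hx hwne hxw, hw⟩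
  choose nf hnf1 hnf2 using next
  obtain ⟨x₀, hx₀⟩ := C.nonempty
  let f : ℕ → {a : V // a ∈ C.supp} := fun n =>
    Nat.rec ⟨x₀, hx₀⟩ (fun _ p => ⟨nf p.1 p.2, hnf1 p.1 p.2⟩) n
  have hdist : ∀ n : ℕ, G.dist (f n).1 w₀ = G.dist x₀ w₀ + n := by
    intro n
    induction n with
    | zero => rfl
    | succ n ih =>
      have : G.dist (f (n+1)).1 w₀ = G.dist (f n).1 w₀ + 1 := hnf2 (f n).1 (f n).2
      omega
  have hinj : Function.Injective (fun n => (f n).1) := by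
    intro m n h
    simp only at h
    have h1 := hdist m
    have h2 := hdist n
    rw [h, h2] at h1
    omega
  exact Set.infinite_of_injective_forall_mem hinj (fun n => (f n).2)

private lemma TreeAux.neighbor_comp_ne {V : Type} {G : SimpleGraph V} (ha : G.IsAcyclic)
    {w₀ n₁ n₂ : V} (h1 : G.Adj w₀ n₁) (h2 : G.Adj w₀ n₂) (hne : n₁ ≠ n₂)
    (hn1 : n₁ ∉ (↑({w₀} : Finset V) : Set V)) (hn2 : n₂ ∉ (↑({w₀} : Finset V) : Set V)) :
    G.componentComplMk hn1 ≠ G.componentComplMk hn2 := by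
  classical
  intro heq
  have hreach : (G.induce (↑({w₀} : Finset V) : Set V)ᶜ).Reachable ⟨n₁, hn1⟩ ⟨n₂, hn2⟩ :=
    SimpleGraph.ConnectedComponent.exact heq
  obtain ⟨p'⟩ := hreach
  let φ : G.induce (↑({w₀} : Finset V) : Set V)ᶜ →g G :=
    ⟨Subtype.val, fun {a b} hab => hab⟩
  let q : G.Walk n₁ n₂ := p'.map φ
  have hw₀q : w₀ ∉ q.support := by
    intro hmem
    rw [SimpleGraph.Walk.support_map] at hmem
    obtain ⟨a, _, ha2⟩ := List.mem_map.mp hmem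
    exact a.2 (by
      simp only [Finset.coe_singleton, Set.mem_compl_iff, Set.mem_singleton_iff] at *
      exact ha2)
  have hr : (SimpleGraph.Walk.cons h1.symm (SimpleGraph.Walk.cons h2
      SimpleGraph.Walk.nil)).IsPath := by
    simp [SimpleGraph.Walk.cons_isPath_iff, hne, h1.ne', h2.ne]
  have heqp := SimpleGraph.isAcyclic_iff_path_unique.mp ha ⟨_, hr⟩ q.toPath
  have hw₀r : w₀ ∈ (SimpleGraph.Walk.cons h1.symm (SimpleGraph.Walk.cons h2
      SimpleGraph.Walk.nil)).support := by simp
  have : w₀ ∈ (q.toPath : G.Walk n₁ n₂).support := by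
    rw [← heqp]; exact hw₀r
  exact hw₀q (SimpleGraph.Walk.support_bypass_subset _ this)

private lemma TreeAux.hom_hom {V : Type} {G : SimpleGraph V} {K K' L M : Set V}
    (C : G.ComponentCompl L) (h1 : K ⊆ L) (h2 : M ⊆ K) (h1' : K' ⊆ L) (h2' : M ⊆ K') :
    (C.hom h1).hom h2 = (C.hom h1').hom h2' := by
  rw [← SimpleGraph.ComponentCompl.hom_trans, ← SimpleGraph.ComponentCompl.hom_trans]

private def TreeAux.auxFunctor {V : Type} [DecidableEq V] (G : SimpleGraph V) (v : V)
    (C₀ : G.ComponentCompl (↑({v} : Finset V))) : (Finset V)ᵒᵖ ⥤ Type where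
  obj K := {C : G.ComponentCompl (↑(K.unop ∪ {v} : Finset V)) //
    C.hom (Finset.coe_subset.mpr Finset.subset_union_right) = C₀}
  map {K L} f := TypeCat.ofHom fun C => ⟨C.val.hom (Finset.coe_subset.mpr
      (Finset.union_subset_union_left (le_of_op_hom f))), by
    rw [← SimpleGraph.ComponentCompl.hom_trans]
    exact C.prop⟩
  map_id K := by
    ext C : 3
    apply Subtype.ext
    exact C.val.hom_refl
  map_comp {K L M} f g := by
    ext C : 3
    apply Subtype.ext
    exact C.val.hom_trans
      (Finset.coe_subset.mpr (Finset.union_subset_union_left (le_of_op_hom f)))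
      (Finset.coe_subset.mpr (Finset.union_subset_union_left (le_of_op_hom g)))

private lemma TreeAux.exists_end_through {V : Type} [DecidableEq V] (G : SimpleGraph V)
    [G.LocallyFinite] [Fact G.Preconnected] (v : V)
    (C₀ : G.ComponentCompl (↑({v} : Finset V))) (hC₀ : C₀.supp.Infinite) :
    ∃ e : G.end, e.val (op ({v} : Finset V)) = C₀ := by
  classical
  haveI hFin : ∀ K : (Finset V)ᵒᵖ, Finite ((TreeAux.auxFunctor G v C₀).obj K) := by
    intro K
    exact Subtype.finite
  haveI hNe : ∀ K : (Finset V)ᵒᵖ, Nonempty ((TreeAux.auxFunctor G v C₀).obj K) := by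
    intro K
    obtain ⟨x, hx1, hx2⟩ := (hC₀.diff (K.unop ∪ {v} : Finset V).finite_toSet).nonempty
    obtain ⟨hxv, hmk⟩ := hx1
    exact ⟨⟨G.componentComplMk hx2, by rw [SimpleGraph.ComponentCompl.hom_mk]; exact hmk⟩⟩
  obtain ⟨s', hs'⟩ := nonempty_sections_of_finite_inverse_system (TreeAux.auxFunctor G v C₀)
  let s : ∀ K : (Finset V)ᵒᵖ, G.componentComplFunctor.obj K := fun K =>
    (s' K).val.hom (Finset.coe_subset.mpr Finset.subset_union_left)
  have hsec : s ∈ G.componentComplFunctor.sections := by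
    intro K L f
    have key := congrArg
      (fun X : (TreeAux.auxFunctor G v C₀).obj L =>
        X.val.hom (Finset.coe_subset.mpr Finset.subset_union_left)) (hs' f)
    exact Eq.trans (TreeAux.hom_hom (s' K).val
      (Finset.coe_subset.mpr Finset.subset_union_left)
      (Finset.coe_subset.mpr (le_of_op_hom f))
      (Finset.coe_subset.mpr (Finset.union_subset_union_left (le_of_op_hom f)))
      (Finset.coe_subset.mpr Finset.subset_union_left)) (by exact key)
  refine ⟨⟨s, hsec⟩, ?_⟩
  exact (s' (op ({v} : Finset V))).prop

end AuxCantor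

/-- **The Julia set is a Cantor set.**
Let `F : T → T` be a polynomial-like branched covering of a simplicial tree.
Then the Julia set `J(F) = ∂T ∖ {infty}`, with the subspace topology from the
space of ends, is nonempty, compact, perfect (has no isolated points) and
totally disconnected. -/
theorem julia_set_is_cantor
    {V : Type} (T : TreeDyn V) (infty : T.G.end)
    (hpl : T.IsPolyLike infty) :
    Nonempty (JSet T infty) ∧
    @CompactSpace (JSet T infty) (JTop T infty) ∧
    (∀ p : JSet T infty, ¬ @IsOpen (JSet T infty) (JTop T infty) {p}) ∧
    @TotallyDisconnectedSpace (JSet T infty) (JTop T infty) := by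
  classical
  obtain ⟨hdeg, hiso, huniq, hval, horb⟩ := hpl
  have hc : T.G.Connected := T.isTree.isConnected
  have hacyc : T.G.IsAcyclic := T.isTree.IsAcyclic
  letI : T.G.LocallyFinite := fun v => (T.locFin v).fintype
  haveI : Fact T.G.Preconnected := ⟨hc.preconnected⟩
  -- Nonempty: construct an end distinct from infty
  obtain ⟨v₁, hv₁⟩ := (infty.val (op (∅ : Finset V))).nonempty
  obtain ⟨w₀, -, hw₀⟩ := horb v₁
  have hne₀ : (T.G.neighborSet w₀).Nonempty := by
    rw [← Set.ncard_pos (T.locFin w₀)]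
    omega
  obtain ⟨u₀, hu₀⟩ := hne₀
  haveI : Nontrivial V := ⟨⟨w₀, u₀, ((T.G.mem_neighborSet _ _).mp hu₀).ne⟩⟩
  obtain ⟨n₁, n₂, hn₁, hn₂, hn₁₂⟩ := (Set.one_lt_ncard_iff (T.locFin w₀)).mp (by omega)
  have hadj₁ : T.G.Adj w₀ n₁ := hn₁
  have hadj₂ : T.G.Adj w₀ n₂ := hn₂
  have hnm₁ : n₁ ∉ (↑({w₀} : Finset V) : Set V) := by
    simp only [Finset.coe_singleton, Set.mem_singleton_iff]
    exact hadj₁.ne'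
  have hnm₂ : n₂ ∉ (↑({w₀} : Finset V) : Set V) := by
    simp only [Finset.coe_singleton, Set.mem_singleton_iff]
    exact hadj₂.ne'
  have hCne := TreeAux.neighbor_comp_ne hacyc hadj₁ hadj₂ hn₁₂ hnm₁ hnm₂
  set D : T.G.ComponentCompl (↑({w₀} : Finset V)) := infty.val (op ({w₀} : Finset V)) with hD
  have hex : ∃ C₀ : T.G.ComponentCompl (↑({w₀} : Finset V)), C₀ ≠ D := by
    by_cases h : T.G.componentComplMk hnm₁ = D
    · exact ⟨T.G.componentComplMk hnm₂, fun h2 => hCne (h.trans h2.symm)⟩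
    · exact ⟨T.G.componentComplMk hnm₁, h⟩
  obtain ⟨C₀, hC₀D⟩ := hex
  have hC₀inf : C₀.supp.Infinite :=
    TreeAux.comp_infinite hc hacyc T.locFin hval w₀ C₀
  obtain ⟨e₀, he₀⟩ := TreeAux.exists_end_through T.G w₀ C₀ hC₀inf
  have he₀ne : e₀ ≠ infty := by
    intro h
    rw [h] at he₀
    exact hC₀D he₀.symm
  have hnonempty : Nonempty (JSet T infty) := ⟨⟨e₀, he₀ne⟩⟩
  -- Topology
  letI : ∀ K : (Finset V)ᵒᵖ, TopologicalSpace (T.G.componentComplFunctor.obj K) := fun _ => ⊥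
  haveI : ∀ K : (Finset V)ᵒᵖ, DiscreteTopology (T.G.componentComplFunctor.obj K) := fun _ => ⟨rfl⟩
  letI tX : TopologicalSpace (∀ K : (Finset V)ᵒᵖ, T.G.componentComplFunctor.obj K) :=
    Pi.topologicalSpace
  letI tE : TopologicalSpace T.G.end := endTop T.G
  letI tJ : TopologicalSpace (JSet T infty) := JTop T infty
  have h_end : tE = TopologicalSpace.induced (Subtype.val) tX := rfl
  have emb2 : Topology.IsEmbedding (Subtype.val : T.G.end →
      (∀ K : (Finset V)ᵒᵖ, T.G.componentComplFunctor.obj K)) :=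
    ⟨⟨h_end⟩, Subtype.val_injective⟩
  let e : JSet T infty → (∀ K : (Finset V)ᵒᵖ, T.G.componentComplFunctor.obj K) :=
    fun p => p.val.val
  have hJ : tJ = TopologicalSpace.induced e tX := by
    show TopologicalSpace.induced Subtype.val (TopologicalSpace.induced Subtype.val tX) = _
    rw [induced_compose]
    rfl
  have hinj : Function.Injective e := fun p q h =>
    Subtype.ext (Subtype.ext h)
  have emb : Topology.IsEmbedding e := ⟨⟨hJ⟩, hinj⟩
  haveI t2X : T2Space (∀ K : (Finset V)ᵒᵖ, T.G.componentComplFunctor.obj K) := by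
    infer_instance
  have hsec_closed :
      IsClosed (T.G.end : Set (∀ K : (Finset V)ᵒᵖ, T.G.componentComplFunctor.obj K)) := by
    have heq : (T.G.end : Set (∀ K : (Finset V)ᵒᵖ, T.G.componentComplFunctor.obj K)) =
        ⋂ (j : (Finset V)ᵒᵖ) (j' : (Finset V)ᵒᵖ) (f : j ⟶ j'),
          {s | T.G.componentComplFunctor.map f (s j) = s j'} := by
      ext s
      simp only [Set.mem_iInter, Set.mem_setOf_eq]
      exact ⟨fun h j j' f => h f, fun h {j j'} f => h j j' f⟩
    rw [heq]
    refine isClosed_iInter fun j => isClosed_iInter fun j' => isClosed_iInter fun f => ?_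
    exact isClosed_eq ((continuous_of_discreteTopology).comp (continuous_apply j))
      (continuous_apply j')
  obtain ⟨U, hUopen, hUeq⟩ := emb2.isInducing.isOpen_iff.mp hiso
  have hrange : Set.range e = (T.G.end : Set _) ∩ Uᶜ := by
    ext f
    constructor
    · rintro ⟨p, rfl⟩
      refine ⟨p.val.prop, fun hf => ?_⟩
      have : p.val ∈ Subtype.val ⁻¹' U := hf
      rw [hUeq] at this
      exact p.prop this
    · rintro ⟨hf1, hf2⟩
      refine ⟨⟨⟨f, hf1⟩, fun h => ?_⟩, rfl⟩
      apply hf2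
      have : infty ∈ Subtype.val ⁻¹' U := by rw [hUeq]; rfl
      rw [← h] at this
      exact this
  refine ⟨hnonempty, ?_, ?_, ?_⟩
  · haveI : CompactSpace (∀ K : (Finset V)ᵒᵖ, T.G.componentComplFunctor.obj K) := by
      infer_instance
    have hcomp : IsCompact (Set.range e) := by
      rw [hrange]
      exact (hsec_closed.inter (hUopen.isClosed_compl)).isCompact
    constructor
    rw [emb.isCompact_iff, Set.image_univ]
    exact hcomp
  · intro p hp
    haveI : T2Space T.G.end := emb2.t2Space
    obtain ⟨W, hWopen, hWeq⟩ := Topology.IsEmbedding.subtypeVal.isInducing.isOpen_iff.mp hp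
    have hopen : IsOpen (W ∩ {infty}ᶜ) := hWopen.inter isClosed_singleton.isOpen_compl
    have hvalW : W ∩ {infty}ᶜ = {p.val} := by
      ext q
      constructor
      · rintro ⟨hq1, hq2⟩
        have : (⟨q, hq2⟩ : JSet T infty) ∈ Subtype.val ⁻¹' W := hq1
        rw [hWeq] at this
        exact congrArg Subtype.val this
      · rintro rfl
        refine ⟨?_, p.prop⟩
        have : p ∈ Subtype.val ⁻¹' W := by rw [hWeq]; rfl
        exact this
    have hpiso : IsIsolatedEnd T.G p.val := by
      show IsOpen {p.val}
      rw [← hvalW]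
      exact hopen
    exact p.prop (huniq _ hpiso)
  · haveI : TotallyDisconnectedSpace
        (∀ K : (Finset V)ᵒᵖ, T.G.componentComplFunctor.obj K) := by
      infer_instance
    exact emb.isTotallyDisconnected_range.mp
      (isTotallyDisconnected_of_totallyDisconnectedSpace _)
end
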